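/- arXiv:2305.02800 — 6 statements merged into one kernel-verified Lean document; each statement's English description precedes it below -/
import Mathlib

section
/- Let G be a multicolored graph and let C be a cycle in G. Suppose there exist two colors x and y such that every vertex of C carries at least one of x and y in its color set. Then G admits no properly multicolored triangulation. -/
/-- A chord of a cycle (given as a closed walk) in the graph `H`: an edge of `H`
between two vertices of the cycle that are not neighbors on the cycle. -/
def HasChord {V : Type} (H : SimpleGraph V) {v : V} (c : H.Walk v v) : Prop :=
  ∃ u w : V, u ∈ c.support ∧ w ∈ c.support ∧ H.Adj u w ∧ s(u, w) ∉ c.edges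

/-- A graph is triangulated (chordal) if every cycle of length at least four has a chord. -/
def IsChordal {V : Type} (H : SimpleGraph V) : Prop :=
  ∀ ⦃v : V⦄ (c : H.Walk v v), c.IsCycle → 4 ≤ c.length → HasChord H c

/-- A graph is properly multicolored if no edge joins two vertices whose color sets intersect. -/
def ProperlyMulticolored {V C : Type} (H : SimpleGraph V) (col : V → Set C) : Prop :=
  ∀ ⦃u w : V⦄, H.Adj u w → Disjoint (col u) (col w)

open SimpleGraph Walk

lemma adj_flip {V C : Type} {H : SimpleGraph V} {col : V → Set C} {x y : C}
    (hprop : ProperlyMulticolored H col) {a b : V}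
    (hadj : H.Adj a b) (ha : x ∈ col a ∨ y ∈ col a) (hb : x ∈ col b ∨ y ∈ col b) :
    ¬(x ∈ col a ↔ x ∈ col b) := by
  intro h
  have hd := hprop hadj
  by_cases hx : x ∈ col a
  · exact Set.disjoint_left.mp hd hx (h.mp hx)
  · have hya : y ∈ col a := ha.resolve_left hx
    have hyb : y ∈ col b := hb.resolve_left (fun hxb => hx (h.mpr hxb))
    exact Set.disjoint_left.mp hd hya hyb

lemma walk_parity {V C : Type} {H : SimpleGraph V} {col : V → Set C} {x y : C}
    (hprop : ProperlyMulticolored H col) {a b : V} (p : H.Walk a b)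
    (hS : ∀ u ∈ p.support, x ∈ col u ∨ y ∈ col u) :
    ((x ∈ col a ↔ x ∈ col b) ↔ Even p.length) := by
  induction p with
  | nil => simp
  | @cons a a' b h q ih =>
    have hS' : ∀ u ∈ q.support, x ∈ col u ∨ y ∈ col u :=
      fun u hu => hS u (by simp [hu])
    have hflip := adj_flip (x := x) (y := y) hprop h
      (hS a (by simp)) (hS a' (by simp))
    have hiq := ih hS'
    rw [Walk.length_cons, Nat.even_add_one, ← hiq]
    tauto

lemma mem_closed_support {V : Type} {H : SimpleGraph V} {v : V} (c : H.Walk v v)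
    (hnil : ¬c.Nil) {a : V} : a ∈ c.support ↔ a ∈ c.support.tail := by
  constructor
  · intro h
    rw [c.support_eq_cons] at h
    rcases List.mem_cons.mp h with rfl | h
    · rw [← Walk.support_tail_of_not_nil c hnil]; exact Walk.end_mem_support _
    · exact h
  · intro h; rw [c.support_eq_cons]; exact List.mem_cons_of_mem _ h

lemma two_le_length_of_edge_not_mem {V : Type} {H : SimpleGraph V} {a b : V}
    (q : H.Walk a b) (hne : a ≠ b) (hedge : s(a, b) ∉ q.edges) : 2 ≤ q.length := by
  cases q with
  | nil => exact absurd rfl hne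
  | cons h' q' =>
    cases q' with
    | nil => simp at hedge
    | cons h'' q'' => simp [Walk.length_cons]

lemma no_S_cycle {V C : Type} {H : SimpleGraph V} {col : V → Set C} {x y : C}
    (hprop : ProperlyMulticolored H col) (hchord : IsChordal H) :
    ∀ (n : ℕ) {v : V} (c : H.Walk v v), c.length = n → c.IsCycle →
      (∀ u ∈ c.support, x ∈ col u ∨ y ∈ col u) → False := by
  classical
  intro n
  induction n using Nat.strong_induction_on with
  | _ n ih =>
  intro v c hlen hc hS
  have heven : Even c.length := (walk_parity hprop c hS).mp Iff.rfl
  have h3 := hc.three_le_length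
  have h4 : 4 ≤ c.length := by
    obtain ⟨k, hk⟩ := heven; omega
  obtain ⟨u, w, hu, hw, hadj, hne⟩ := hchord c hc h4
  have hc0 : (c.rotate u hu).IsCycle := hc.rotate hu
  set c0 := c.rotate u hu with hc0def
  have hnilc : ¬c.Nil := hc.not_nil
  have hnilc0 : ¬c0.Nil := hc0.not_nil
  have hmem : ∀ a : V, a ∈ c0.support ↔ a ∈ c.support := by
    intro a
    rw [mem_closed_support c0 hnilc0, mem_closed_support c hnilc]
    exact (support_rotate c u hu).mem_iff
  have hemem : ∀ e, e ∈ c0.edges ↔ e ∈ c.edges := fun e => (rotate_edges c u hu).mem_iff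
  have hw0 : w ∈ c0.support := (hmem w).mpr hw
  set p := c0.takeUntil w hw0 with hpdef
  set q := c0.dropUntil w hw0 with hqdef
  have hspec : p.append q = c0 := c0.take_spec hw0
  have huw : u ≠ w := hadj.ne
  -- p is a path
  have hsupp : c0.support = p.support ++ q.support.tail := by
    rw [← hspec, support_append]
  have htail : c0.support.tail = p.support.tail ++ q.support.tail := by
    rw [hsupp, p.support_eq_cons]; simp
  have hnd : (p.support.tail ++ q.support.tail).Nodup := htail ▸ hc0.support_nodup
  have huq : u ∈ q.support.tail := end_mem_tail_support_of_ne (Ne.symm huw) q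
  have hup : u ∉ p.support.tail := fun h => (List.disjoint_of_nodup_append hnd) h huq
  have hpnodup : p.support.Nodup := by
    rw [p.support_eq_cons]
    exact List.nodup_cons.mpr ⟨hup, (List.nodup_append.mp hnd).1⟩
  have hppath : p.IsPath := (Walk.isPath_def p).mpr hpnodup
  -- the chord edge is not in p
  have hwu_not : s(w, u) ∉ p.edges := by
    intro h
    have : s(u, w) ∈ c.edges := (hemem _).mp (edges_takeUntil_subset c0 hw0 (Sym2.eq_swap ▸ h))
    exact hne this
  -- the new cycle
  have hd : (Walk.cons hadj.symm p).IsCycle :=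
    (Walk.cons_isCycle_iff p hadj.symm).mpr ⟨hppath, hwu_not⟩
  -- length bounds
  have hlen0 : p.length + q.length = c0.length := by
    rw [← hspec, length_append]
  have hlc0 : c0.length = c.length := by
    rw [hc0def]; unfold Walk.rotate
    rw [length_append]
    conv_rhs => rw [← c.take_spec hu]
    rw [length_append]
    omega
  have hqedge : s(w, u) ∉ q.edges := by
    intro h
    exact hne ((hemem _).mp (edges_dropUntil_subset c0 hw0 (Sym2.eq_swap ▸ h)))
  have hq2 : 2 ≤ q.length := two_le_length_of_edge_not_mem q (Ne.symm huw) hqedge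
  have hdlen : (Walk.cons hadj.symm p).length < n := by
    rw [Walk.length_cons]; omega
  -- support condition
  have hdS : ∀ a ∈ (Walk.cons hadj.symm p).support, x ∈ col a ∨ y ∈ col a := by
    intro a ha
    rw [Walk.support_cons, List.mem_cons] at ha
    rcases ha with rfl | ha
    · exact hS a hw
    · exact hS a ((hmem a).mp (support_takeUntil_subset c0 hw0 ha))
  exact ih _ hdlen (Walk.cons hadj.symm p) rfl hd hdS

/-- if every vertex of a cycle of a multicolored graph `G` carries at least
one of the two colors `x`, `y`, then `G` has no properly multicolored triangulation. -/
theorem no_triangulation_of_two_colored_cycle {V C : Type}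
    (G : SimpleGraph V) (col : V → Set C)
    {v : V} (c : G.Walk v v) (hc : c.IsCycle)
    (x y : C) (hxy : ∀ u ∈ c.support, x ∈ col u ∨ y ∈ col u) :
    ¬ ∃ H : SimpleGraph V, G ≤ H ∧ IsChordal H ∧ ProperlyMulticolored H col := by
  rintro ⟨H, hle, hch, hprop⟩
  have hsub : ∀ e ∈ c.edges, e ∈ H.edgeSet :=
    fun e he => SimpleGraph.edgeSet_mono hle (c.edges_subset_edgeSet he)
  have hcH : (c.transfer H hsub).IsCycle := hc.transfer hsub
  have hSH : ∀ u ∈ (c.transfer H hsub).support, x ∈ col u ∨ y ∈ col u := by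
    rw [support_transfer]; exact hxy
  exact no_S_cycle hprop hch (c.transfer H hsub).length (c.transfer H hsub) rfl hcH hSH
end

section
/- Let G be a graph, C a cycle in G of length at least three, and v a vertex of C. In every triangulation H of G, either the two neighbors of v on C are adjacent in H, or v is adjacent in H to some vertex of C that is not a neighbor of v on C. -/
open SimpleGraph Walk

private lemma getVert_transfer' {V : Type} {G H : SimpleGraph V} {u v : V} (p : G.Walk u v)
    (hp : ∀ e ∈ p.edges, e ∈ H.edgeSet) (i : ℕ) :
    (p.transfer H hp).getVert i = p.getVert i := by
  induction p generalizing i with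
  | nil => rfl
  | cons h q ih =>
    cases i with
    | zero => rfl
    | succ n => exact (Walk.getVert_cons_succ _ _).trans ((ih _ n).trans (Walk.getVert_cons_succ _ _).symm)

private lemma edge_getVert_mem' {V : Type} {G : SimpleGraph V} {a b : V} (p : G.Walk a b) {i : ℕ}
    (hi : i < p.length) : s(p.getVert i, p.getVert (i + 1)) ∈ p.edges := by
  induction p generalizing i with
  | nil => simp at hi
  | cons h q ih =>
    cases i with
    | zero =>
      simp [Walk.getVert_zero, Walk.getVert_cons_succ, Walk.edges_cons]
    | succ m =>
      simp only [Walk.getVert_cons_succ, Walk.edges_cons, List.mem_cons]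
      exact Or.inr (ih (by simpa [Walk.length_cons, Nat.succ_lt_succ_iff] using hi))

private lemma getVert_append_one' {V : Type} {G : SimpleGraph V} {a b c : V} (p : G.Walk a b)
    (q : G.Walk b c) (hp : 1 ≤ p.length) : (p.append q).getVert 1 = p.getVert 1 := by
  rw [Walk.getVert_append]
  split_ifs with h
  · rfl
  · have h1 : p.length = 1 := by omega
    rw [h1]
    simpa [Walk.getVert_zero] using (Walk.getVert_length p).symm.trans (by rw [h1])

private lemma getVert_append_penult' {V : Type} {G : SimpleGraph V} {a b c : V} (p : G.Walk a b)
    (q : G.Walk b c) (hq : 1 ≤ q.length) :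
    (p.append q).getVert ((p.append q).length - 1) = q.getVert (q.length - 1) := by
  rw [Walk.getVert_append, Walk.length_append]
  have : ¬ (p.length + q.length - 1 < p.length) := by omega
  rw [if_neg this]
  congr 1
  omega

private lemma chordal_key {V : Type} [DecidableEq V] (H : SimpleGraph V) (hH : IsChordal H) :
    ∀ n : ℕ, ∀ {v : V} (c : H.Walk v v), c.length ≤ n → c.IsCycle → 3 ≤ c.length →
      H.Adj (c.getVert 1) (c.getVert (c.length - 1)) ∨
      ∃ w ∈ c.support, w ≠ v ∧ w ≠ c.getVert 1 ∧ w ≠ c.getVert (c.length - 1) ∧ H.Adj v w := by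
  intro n
  induction n with
  | zero => intro v c h _ h3; omega
  | succ n ih =>
    intro v c hn hc h3
    rcases Nat.lt_or_ge c.length 4 with h4 | h4
    · -- length exactly 3 : the two neighbors are adjacent on the cycle
      left
      have h1 : (1 : ℕ) < c.length := by omega
      have hadj := c.adj_getVert_succ h1
      have hl : c.length - 1 = 1 + 1 := by omega
      rw [hl]
      exact hadj
    · obtain ⟨u, w, hu, hw, huw, hch⟩ := hH c hc h4
      -- the case of a chord incident to v
      have fromv : ∀ x : V, x ∈ c.support → H.Adj v x → s(v, x) ∉ c.edges →
          (H.Adj (c.getVert 1) (c.getVert (c.length - 1)) ∨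
          ∃ y ∈ c.support, y ≠ v ∧ y ≠ c.getVert 1 ∧ y ≠ c.getVert (c.length - 1) ∧ H.Adj v y) := by
        intro x hx hax hchx
        right
        refine ⟨x, hx, hax.ne', ?_, ?_, hax⟩
        · intro hx1
          apply hchx
          have := edge_getVert_mem' c (i := 0) (by omega)
          rw [Walk.getVert_zero] at this
          rw [hx1]
          exact this
        · intro hx2
          apply hchx
          have := edge_getVert_mem' c (i := c.length - 1) (by omega)
          have hl : c.length - 1 + 1 = c.length := by omega
          rw [hl, Walk.getVert_length] at this
          rw [hx2, Sym2.eq_swap]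
          exact this
      by_cases huv : u = v
      · subst huv; exact fromv w hw huw hch
      by_cases hwv : w = v
      · subst hwv
        exact fromv u hu huw.symm (by rwa [Sym2.eq_swap])
      -- main case : a chord not incident to v; split the cycle
      have main : ∀ u w : V, u ≠ v → w ≠ v → H.Adj u w → s(u, w) ∉ c.edges →
          ∀ (P : H.Walk v u) (D : H.Walk u v), P.append D = c → ∀ hwD : w ∈ D.support,
          (H.Adj (c.getVert 1) (c.getVert (c.length - 1)) ∨
          ∃ y ∈ c.support, y ≠ v ∧ y ≠ c.getVert 1 ∧ y ≠ c.getVert (c.length - 1) ∧ H.Adj v y) := by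
        clear hu hw huw hch huv hwv u w
        intro u w huv hwv huw hch P D hPD hwD
        set T := D.takeUntil w hwD with hTdef
        set Q := D.dropUntil w hwD with hQdef
        have hTQ : T.append Q = D := D.take_spec hwD
        have lenP : 1 ≤ P.length := by
          rcases Nat.eq_zero_or_pos P.length with h0 | h0
          · exact absurd (Walk.eq_of_length_eq_zero h0).symm huv
          · exact h0
        have lenQ : 1 ≤ Q.length := by
          rcases Nat.eq_zero_or_pos Q.length with h0 | h0
          · exact absurd (Walk.eq_of_length_eq_zero h0) hwv
          · exact h0
        have hce : c.edges = P.edges ++ D.edges := by rw [← hPD, Walk.edges_append]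
        have hQeD : Q.edges ⊆ D.edges := Walk.edges_dropUntil_subset D hwD
        have lenT : 2 ≤ T.length := by
          rcases Nat.eq_zero_or_pos T.length with h0 | h0
          · exact absurd (Walk.eq_of_length_eq_zero h0) huw.ne
          rcases Nat.lt_or_ge T.length 2 with h1 | h1
          · exfalso
            have hTl : T.length = 1 := by omega
            have := edge_getVert_mem' T (i := 0) (by omega)
            rw [Walk.getVert_zero] at this
            have h2 : T.getVert (0 + 1) = w := by
              have := Walk.getVert_length T
              rwa [hTl] at this
            rw [h2] at this
            apply hch
            rw [hce]
            exact List.mem_append_right _ (Walk.edges_takeUntil_subset D hwD this)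
          · exact h1
        have hlc : c.length = P.length + D.length := by rw [← hPD, Walk.length_append]
        have hlD : D.length = T.length + Q.length := by rw [← hTQ, Walk.length_append]
        set c1 : H.Walk v v := P.append (Walk.cons huw Q) with hc1def
        have hlen1 : c1.length = P.length + (Q.length + 1) := by
          rw [hc1def, Walk.length_append, Walk.length_cons]
        -- support nodup
        have htail : c.support.tail = P.support.tail ++ D.support.tail := by
          rw [← hPD, Walk.tail_support_append]
        have hnd := hc.support_nodup
        rw [htail, List.nodup_append] at hnd
        obtain ⟨ndP, ndD, disjPD⟩ := hnd
        have huP : u ∈ P.support.tail := Walk.end_mem_tail_support_of_ne (Ne.symm huv) P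
        have huD : u ∉ D.support.tail := fun h => disjPD _ huP _ h rfl
        have hDnodup : D.support.Nodup := by
          rw [Walk.support_eq_cons]
          exact List.nodup_cons.mpr ⟨huD, ndD⟩
        have hDpath : D.IsPath := (Walk.isPath_def D).mpr hDnodup
        have hQnodup : Q.support.Nodup := (hDpath.dropUntil hwD).support_nodup
        have hDsup : D.support = T.support ++ Q.support.tail := by
          rw [← hTQ, Walk.support_append]
        rw [hDsup, List.nodup_append] at hDnodup
        obtain ⟨ndT, ndQt, disjTQ⟩ := hDnodup
        have huQ : u ∉ Q.support := by
          rw [Walk.support_eq_cons]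
          intro h
          rcases List.mem_cons.mp h with h | h
          · exact huw.ne h
          · exact disjTQ _ T.start_mem_support _ h rfl
        have hQsubD : Q.support ⊆ D.support := Walk.support_dropUntil_subset D hwD
        have disjPQ : List.Disjoint P.support.tail Q.support := by
          intro x hxP hxQ
          have hxD := hQsubD hxQ
          rw [Walk.support_eq_cons] at hxD
          rcases List.mem_cons.mp hxD with rfl | hxD
          · exact huQ hxQ
          · exact disjPD _ hxP _ hxD rfl
        have sup_nodup : c1.support.tail.Nodup := by
          rw [hc1def, Walk.tail_support_append, Walk.support_cons, List.tail_cons]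
          exact List.nodup_append'.mpr ⟨ndP, hQnodup, disjPQ⟩
        -- trail
        have hcnodup := hc.isCircuit.isTrail.edges_nodup
        rw [hce, List.nodup_append] at hcnodup
        obtain ⟨ndPe, ndDe, disjPDe⟩ := hcnodup
        have hDe : D.edges = T.edges ++ Q.edges := by rw [← hTQ, Walk.edges_append]
        rw [hDe, List.nodup_append] at ndDe
        obtain ⟨ndTe, ndQe, disjTQe⟩ := ndDe
        have hchQ : s(u, w) ∉ Q.edges := fun h =>
          hch (by rw [hce]; exact List.mem_append_right _ (hQeD h))
        have hchP : s(u, w) ∉ P.edges := fun h =>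
          hch (by rw [hce]; exact List.mem_append_left _ h)
        have trail : c1.IsTrail := by
          rw [Walk.isTrail_def, hc1def, Walk.edges_append, Walk.edges_cons]
          refine List.nodup_append'.mpr ⟨ndPe, List.nodup_cons.mpr ⟨hchQ, ndQe⟩, ?_⟩
          intro x hxP hx
          rcases List.mem_cons.mp hx with rfl | hx
          · exact hchP hxP
          · exact disjPDe _ hxP _ (hQeD hx) rfl
        have ne_nil : c1 ≠ Walk.nil := by
          intro h
          have h0 : c1.length = 0 := by rw [h]; rfl
          omega
        have hc1 : c1.IsCycle := ⟨⟨trail, ne_nil⟩, sup_nodup⟩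
        -- lengths
        have hl1 : c1.length ≤ n := by omega
        have h31 : 3 ≤ c1.length := by omega
        -- identify neighbors of v
        have g1 : c1.getVert 1 = c.getVert 1 := by
          rw [hc1def, getVert_append_one' _ _ lenP, ← hPD, getVert_append_one' _ _ lenP]
        have e1 : c.getVert (c.length - 1) = D.getVert (D.length - 1) := by
          rw [← hPD]; exact getVert_append_penult' P D (by omega)
        have e2 : D.getVert (D.length - 1) = Q.getVert (Q.length - 1) := by
          rw [← hTQ]; exact getVert_append_penult' T Q lenQ
        have g2 : c1.getVert (c1.length - 1) = Q.getVert (Q.length - 1) := by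
          rw [hc1def]
          rw [getVert_append_penult' P (Walk.cons huw Q) (by rw [Walk.length_cons]; omega)]
          rw [Walk.length_cons]
          have hq0 : Q.length + 1 - 1 = Q.length := by omega
          rw [hq0, Walk.getVert_cons Q huw (by omega)]
        -- apply induction hypothesis
        rcases ih c1 hl1 hc1 h31 with hadj | ⟨x, hxs, hx1, hx2, hx3, hax⟩
        · left
          rw [g1, g2] at hadj
          rw [e1, e2]
          exact hadj
        · right
          refine ⟨x, ?_, hx1, ?_, ?_, hax⟩
          · rw [hc1def, Walk.mem_support_append_iff] at hxs
            rcases hxs with hxs | hxs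
            · rw [← hPD, Walk.mem_support_append_iff]
              exact Or.inl hxs
            · rw [Walk.support_cons] at hxs
              rcases List.mem_cons.mp hxs with rfl | hxs
              · rw [← hPD, Walk.mem_support_append_iff]
                exact Or.inr D.start_mem_support
              · rw [← hPD, Walk.mem_support_append_iff]
                exact Or.inr (hQsubD hxs)
          · rw [← g1]; exact hx2
          · rw [e1, e2, ← g2]; exact hx3
      -- produce a decomposition with the second chord endpoint in the suffix
      obtain ⟨P, D, hPD⟩ := Walk.mem_support_iff_exists_append.mp hu
      have hw' := hw
      rw [hPD, Walk.mem_support_append_iff] at hw'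
      rcases hw' with hwP | hwD
      · -- w occurs in the prefix : split at w instead
        have hPsplit := P.take_spec hwP
        have hassoc : (P.takeUntil w hwP).append ((P.dropUntil w hwP).append D) = c := by
          rw [Walk.append_assoc, hPsplit]
          exact hPD.symm
        refine main w u hwv huv huw.symm (by rwa [Sym2.eq_swap]) (P.takeUntil w hwP)
          ((P.dropUntil w hwP).append D) hassoc ?_
        rw [Walk.mem_support_append_iff]
        exact Or.inl (P.dropUntil w hwP).end_mem_support
      · exact main u w huv hwv huw hch P D hPD.symm hwD

/-- given a cycle `c` of `G` through the vertex `v` (we take the cycle to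
start at `v`, so its neighbors on the cycle are `c.getVert 1` and `c.getVert (c.length - 1)`),
in every triangulation `H` of `G` either the two neighbors of `v` on the cycle are adjacent
in `H`, or `v` is adjacent in `H` to a vertex of the cycle that is not one of its
neighbors on the cycle. -/
theorem neighbors_adjacent_or_chord_from_vertex {V : Type}
    (G H : SimpleGraph V) {v : V} (c : G.Walk v v)
    (hc : c.IsCycle) (hlen : 3 ≤ c.length)
    (hGH : G ≤ H) (hH : IsChordal H) :
    H.Adj (c.getVert 1) (c.getVert (c.length - 1)) ∨
    ∃ w ∈ c.support, w ≠ v ∧ w ≠ c.getVert 1 ∧ w ≠ c.getVert (c.length - 1) ∧ H.Adj v w := by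
  classical
  have hedges : ∀ e ∈ c.edges, e ∈ H.edgeSet := fun e he =>
    SimpleGraph.edgeSet_mono hGH (c.edges_subset_edgeSet he)
  have key := chordal_key H hH (c.transfer H hedges).length (c.transfer H hedges) le_rfl
    (hc.transfer hedges) (by rw [Walk.length_transfer]; exact hlen)
  simp only [Walk.length_transfer, getVert_transfer', Walk.support_transfer] at key
  exact key
end

section
/- Let G be a multicolored graph, let x and y be two distinct colors, and let P be a path in G from v to w whose vertices alternate between the colors x and y (consecutive vertices of P carry x and y alternately). Let T be a tree decomposition of G in which, for every color c and every bag B, at most one vertex of B has c in its color set. Let B1 be a bag containing v and B2 a bag containing w. Then every vertex of P is contained in at least one bag on the path from B1 to B2 in T. -/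
open SimpleGraph

/-- A tree decomposition of a graph `G`. -/
structure IsTreeDecomp {V T : Type} (G : SimpleGraph V) (tree : SimpleGraph T)
    (bag : T → Set V) : Prop where
  isTree : tree.IsTree
  bag_vertex : ∀ v : V, ∃ t : T, v ∈ bag t
  bag_edge : ∀ ⦃u v : V⦄, G.Adj u v → ∃ t : T, u ∈ bag t ∧ v ∈ bag t
  bag_connected : ∀ v : V, (tree.induce {t : T | v ∈ bag t}).Connected


private lemma getVert_inj' {V : Type} {G : SimpleGraph V} :
    ∀ {v w : V} (p : G.Walk v w), p.IsPath → ∀ i j, i ≤ p.length → j ≤ p.length →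
      p.getVert i = p.getVert j → i = j := by
  intro v w p
  induction p with
  | nil =>
    intro _ i j hi hj _
    simp only [SimpleGraph.Walk.length_nil, Nat.le_zero] at hi hj
    omega
  | cons h p ih =>
    intro hp i j hi hj heq
    rw [SimpleGraph.Walk.cons_isPath_iff] at hp
    rw [SimpleGraph.Walk.length_cons] at hi hj
    match i, j with
    | 0, 0 => rfl
    | 0, (k+1) =>
      exfalso
      rw [SimpleGraph.Walk.getVert_zero, SimpleGraph.Walk.getVert_cons_succ] at heq
      exact hp.2 (SimpleGraph.Walk.mem_support_iff_exists_getVert.mpr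
        ⟨k, heq.symm, by omega⟩)
    | (k+1), 0 =>
      exfalso
      rw [SimpleGraph.Walk.getVert_zero, SimpleGraph.Walk.getVert_cons_succ] at heq
      exact hp.2 (SimpleGraph.Walk.mem_support_iff_exists_getVert.mpr
        ⟨k, heq, by omega⟩)
    | (k+1), (m+1) =>
      rw [SimpleGraph.Walk.getVert_cons_succ, SimpleGraph.Walk.getVert_cons_succ] at heq
      have := ih hp.1 k m (by omega) (by omega) heq
      omega

private lemma side_total' {T : Type} {tree : SimpleGraph T} (hconn : tree.Connected)
    (t0 r s : T) :
    (tree.deleteEdges {s(t0, r)}).Reachable s t0 ∨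
      (tree.deleteEdges {s(t0, r)}).Reachable s r := by
  obtain ⟨p⟩ := hconn s t0
  suffices H : ∀ (a b : T) (_ : tree.Walk a b),
      ((tree.deleteEdges {s(t0, r)}).Reachable b t0 ∨
        (tree.deleteEdges {s(t0, r)}).Reachable b r) →
      ((tree.deleteEdges {s(t0, r)}).Reachable a t0 ∨
        (tree.deleteEdges {s(t0, r)}).Reachable a r) by
    exact H s t0 p (Or.inl (Reachable.refl _))
  intro a b p
  induction p with
  | nil => exact id
  | @cons a b c h p ih =>
    intro hc
    by_cases he : s(a, b) = s(t0, r)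
    · rw [Sym2.eq_iff] at he
      rcases he with ⟨rfl, rfl⟩ | ⟨rfl, rfl⟩
      · exact Or.inl (Reachable.refl _)
      · exact Or.inr (Reachable.refl _)
    · have hadj : (tree.deleteEdges {s(t0, r)}).Adj a b :=
        SimpleGraph.deleteEdges_adj.mpr ⟨h, by simpa using he⟩
      rcases ih hc with h' | h'
      · exact Or.inl (hadj.reachable.trans h')
      · exact Or.inr (hadj.reachable.trans h')

private lemma no_cross' {T : Type} {tree : SimpleGraph T} (htree : tree.IsTree)
    {t0 r : T} (hadj : tree.Adj t0 r) :
    ¬ (tree.deleteEdges {s(t0, r)}).Reachable t0 r := by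
  have hb := (SimpleGraph.isAcyclic_iff_forall_edge_isBridge.mp htree.IsAcyclic)
    (tree.mem_edgeSet.mpr hadj)
  rw [SimpleGraph.isBridge_iff] at hb
  exact hb

private lemma bag_cross' {V T : Type} {G : SimpleGraph V} {tree : SimpleGraph T}
    {bag : T → Set V} (htd : IsTreeDecomp G tree bag) {t0 r : T} (hadj : tree.Adj t0 r)
    {p : V} {s1 s2 : T} (h1 : p ∈ bag s1) (h2 : p ∈ bag s2)
    (hs1 : (tree.deleteEdges {s(t0, r)}).Reachable s1 r)
    (hs2 : (tree.deleteEdges {s(t0, r)}).Reachable s2 t0) :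
    p ∈ bag t0 ∧ p ∈ bag r := by
  have hnr := no_cross' htd.isTree hadj
  have hconn := htd.isTree.isConnected
  obtain ⟨wlk⟩ := (htd.bag_connected p).preconnected ⟨s1, h1⟩ ⟨s2, h2⟩
  suffices H : ∀ (a b : {t : T // t ∈ {t : T | p ∈ bag t}})
      (w : (tree.induce {t : T | p ∈ bag t}).Walk a b),
      (tree.deleteEdges {s(t0, r)}).Reachable a.1 r →
      (tree.deleteEdges {s(t0, r)}).Reachable b.1 t0 →
      p ∈ bag t0 ∧ p ∈ bag r by
    exact H _ _ wlk hs1 hs2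
  intro a b w
  induction w with
  | nil =>
    intro ha hb
    exact absurd (hb.symm.trans ha) hnr
  | @cons a z b h w ih =>
    intro ha hb
    by_cases hz : (tree.deleteEdges {s(t0, r)}).Reachable z.1 r
    · exact ih hz hb
    · have hadj' : tree.Adj a.1 z.1 := h
      by_cases he : s(a.1, z.1) = s(t0, r)
      · rw [Sym2.eq_iff] at he
        rcases he with ⟨h1', h2'⟩ | ⟨h1', h2'⟩
        · exact absurd (h2' ▸ SimpleGraph.Reachable.refl z.1) hz
        · exact ⟨h2' ▸ z.2, h1' ▸ a.2⟩
      · have hadj'' : (tree.deleteEdges {s(t0, r)}).Adj a.1 z.1 :=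
          SimpleGraph.deleteEdges_adj.mpr ⟨hadj', by simpa using he⟩
        exact absurd (hadj''.symm.reachable.trans ha) hz

private lemma walk_crossA' {V T : Type} {G : SimpleGraph V} {tree : SimpleGraph T}
    {bag : T → Set V} (htd : IsTreeDecomp G tree bag) {t0 r : T} (hadj : tree.Adj t0 r)
    {v w : V} (P : G.Walk v w) :
    ∀ (k a : ℕ), a + k ≤ P.length →
      (∃ s, (tree.deleteEdges {s(t0, r)}).Reachable s t0 ∧ P.getVert a ∈ bag s) →
      (∃ s, (tree.deleteEdges {s(t0, r)}).Reachable s r ∧ P.getVert (a + k) ∈ bag s) →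
      ∃ i, a ≤ i ∧ i ≤ a + k ∧ P.getVert i ∈ bag t0 ∧ P.getVert i ∈ bag r := by
  intro k
  induction k with
  | zero =>
    rintro a _ ⟨s2, hs2, h2⟩ ⟨s1, hs1, h1⟩
    obtain ⟨hh1, hh2⟩ := bag_cross' htd hadj h1 h2 hs1 hs2
    exact ⟨a, le_refl a, by omega, hh1, hh2⟩
  | succ k ih =>
    rintro a hlen hA hB
    by_cases hB0 : ∃ s, (tree.deleteEdges {s(t0, r)}).Reachable s r ∧ P.getVert a ∈ bag s
    · obtain ⟨s1, hs1, h1⟩ := hB0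
      obtain ⟨s2, hs2, h2⟩ := hA
      obtain ⟨hh1, hh2⟩ := bag_cross' htd hadj h1 h2 hs1 hs2
      exact ⟨a, le_refl a, by omega, hh1, hh2⟩
    · have hadjP : G.Adj (P.getVert a) (P.getVert (a + 1)) :=
        P.adj_getVert_succ (by omega)
      obtain ⟨t, ht1, ht2⟩ := htd.bag_edge hadjP
      rcases side_total' htd.isTree.isConnected t0 r t with hta | htb
      · have := ih (a + 1) (by omega) ⟨t, hta, ht2⟩
          (by rw [(by omega : a + 1 + k = a + (k + 1))]; exact hB)
        obtain ⟨i, hi1, hi2, hi3, hi4⟩ := this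
        exact ⟨i, by omega, by omega, hi3, hi4⟩
      · exact absurd ⟨t, htb, ht1⟩ hB0

private lemma walk_crossB' {V T : Type} {G : SimpleGraph V} {tree : SimpleGraph T}
    {bag : T → Set V} (htd : IsTreeDecomp G tree bag) {t0 r : T} (hadj : tree.Adj t0 r)
    {v w : V} (P : G.Walk v w) :
    ∀ (k a : ℕ), a + k ≤ P.length →
      (∃ s, (tree.deleteEdges {s(t0, r)}).Reachable s r ∧ P.getVert a ∈ bag s) →
      (∃ s, (tree.deleteEdges {s(t0, r)}).Reachable s t0 ∧ P.getVert (a + k) ∈ bag s) →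
      ∃ i, a ≤ i ∧ i ≤ a + k ∧ P.getVert i ∈ bag t0 ∧ P.getVert i ∈ bag r := by
  intro k
  induction k with
  | zero =>
    rintro a _ ⟨s1, hs1, h1⟩ ⟨s2, hs2, h2⟩
    obtain ⟨hh1, hh2⟩ := bag_cross' htd hadj h1 h2 hs1 hs2
    exact ⟨a, le_refl a, by omega, hh1, hh2⟩
  | succ k ih =>
    rintro a hlen hB hA
    by_cases hB1 : ∃ s, (tree.deleteEdges {s(t0, r)}).Reachable s r ∧
        P.getVert (a + (k + 1)) ∈ bag s
    · obtain ⟨s1, hs1, h1⟩ := hB1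
      obtain ⟨s2, hs2, h2⟩ := hA
      obtain ⟨hh1, hh2⟩ := bag_cross' htd hadj h1 h2 hs1 hs2
      exact ⟨a + (k + 1), by omega, by omega, hh1, hh2⟩
    · have hadjP : G.Adj (P.getVert (a + k)) (P.getVert (a + k + 1)) :=
        P.adj_getVert_succ (by omega)
      obtain ⟨t, ht1, ht2⟩ := htd.bag_edge hadjP
      rcases side_total' htd.isTree.isConnected t0 r t with hta | htb
      · have := ih a (by omega) hB ⟨t, hta, ht1⟩
        obtain ⟨i, hi1, hi2, hi3, hi4⟩ := this
        exact ⟨i, by omega, by omega, hi3, hi4⟩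
      · exact absurd ⟨t, htb, (by rw [(by omega : a + (k + 1) = a + k + 1)]; exact ht2)⟩ hB1

private lemma core_lemma {V C T : Type} {G : SimpleGraph V} (col : V → Set C)
    (x y : C) {v w : V} (P : G.Walk v w) (hP : P.IsPath)
    (halt : ∀ i ≤ P.length,
      (i % 2 = 0 → x ∈ col (P.getVert i)) ∧ (i % 2 = 1 → y ∈ col (P.getVert i)))
    {tree : SimpleGraph T} {bag : T → Set V} (htd : IsTreeDecomp G tree bag)
    (hcol : ∀ (t : T) (c : C), ∀ u₁ ∈ bag t, ∀ u₂ ∈ bag t,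
      c ∈ col u₁ → c ∈ col u₂ → u₁ = u₂) :
    ∀ (n : ℕ) (t0 : T) (a j b : ℕ), a ≤ j → j ≤ b → b ≤ P.length →
      P.getVert a ∈ bag t0 → P.getVert b ∈ bag t0 →
      ∀ (s₀ : T), P.getVert j ∈ bag s₀ → ∀ (ρ : tree.Walk t0 s₀), ρ.length ≤ n →
      P.getVert j ∈ bag t0 := by
  have hcv : ∀ i ≤ P.length, (if i % 2 = 0 then x else y) ∈ col (P.getVert i) := by
    intro i hi
    rcases Nat.mod_two_eq_zero_or_one i with h | h
    · rw [if_pos h]; exact (halt i hi).1 h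
    · rw [if_neg (by omega)]; exact (halt i hi).2 h
  have hinj := getVert_inj' P hP
  intro n
  induction n with
  | zero =>
    intro t0 a j b _ _ _ _ _ s₀ hs₀ ρ hρ
    have ht : t0 = s₀ := SimpleGraph.Walk.eq_of_length_eq_zero (Nat.le_zero.mp hρ)
    rw [ht]; exact hs₀
  | succ n ih =>
    intro t0 a j b haj hjb hblen ha hb s₀ hs₀ ρ hρ
    by_cases h0 : P.getVert j ∈ bag t0
    · exact h0
    exfalso
    haveI := Classical.decEq T
    have hbp : ρ.bypass.IsPath := SimpleGraph.Walk.bypass_isPath ρ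
    have hbl : ρ.bypass.length ≤ n + 1 := le_trans (SimpleGraph.Walk.length_bypass_le ρ) hρ
    have hts : t0 ≠ s₀ := fun h => h0 (by rw [h]; exact hs₀)
    have hnn : ¬ ρ.bypass.Nil := by
      intro hnil
      exact hts (SimpleGraph.Walk.eq_of_length_eq_zero
        (SimpleGraph.Walk.nil_iff_length_eq.mp hnil))
    obtain ⟨r, hadj, p, heq⟩ := SimpleGraph.Walk.not_nil_iff.mp hnn
    have hpl : p.length ≤ n := by
      rw [heq, SimpleGraph.Walk.length_cons] at hbl; omega
    have hpp : p.IsPath ∧ t0 ∉ p.support := by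
      rw [heq, SimpleGraph.Walk.cons_isPath_iff] at hbp; exact hbp
    have hs₀r : (tree.deleteEdges {s(t0, r)}).Reachable s₀ r := by
      have hne : ∀ e ∈ p.edges, e ∉ ({s(t0, r)} : Set (Sym2 T)) := by
        intro e he hmem
        rw [Set.mem_singleton_iff] at hmem
        subst hmem
        exact hpp.2 (p.fst_mem_support_of_mem_edges he)
      exact (p.toDeleteEdges _ hne).reachable.symm
    have e1 : a + (j - a) = j := by omega
    obtain ⟨i₁, hi₁a, hi₁j, hit0, hir⟩ := walk_crossA' htd hadj P (j - a) a (by omega)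
      ⟨t0, Reachable.refl _, ha⟩ (by rw [e1]; exact ⟨s₀, hs₀r, hs₀⟩)
    rw [e1] at hi₁j
    have e2 : j + (b - j) = b := by omega
    obtain ⟨i₂, hji₂, hi₂b, hit0', hir'⟩ := walk_crossB' htd hadj P (b - j) j (by omega)
      ⟨s₀, hs₀r, hs₀⟩ (by rw [e2]; exact ⟨t0, Reachable.refl _, hb⟩)
    rw [e2] at hi₂b
    have hi₁j' : i₁ < j := lt_of_le_of_ne hi₁j (fun h => h0 (by rw [← h]; exact hit0))
    have hji₂' : j < i₂ := lt_of_le_of_ne hji₂ (fun h => h0 (by rw [h]; exact hit0'))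
    have hpar : i₁ % 2 ≠ i₂ % 2 := by
      intro hp'
      have hc1 := hcv i₁ (by omega)
      have hc2 := hcv i₂ (by omega)
      rw [hp'] at hc1
      have heq' := hcol t0 (if i₂ % 2 = 0 then x else y) _ hit0 _ hit0' hc1 hc2
      have := hinj i₁ i₂ (by omega) (by omega) heq'
      omega
    have hur : P.getVert j ∈ bag r :=
      ih r i₁ j i₂ (le_of_lt hi₁j') (le_of_lt hji₂') (by omega) hir hir' s₀ hs₀ p hpl
    have hj2 := hcv j (by omega)
    rcases (show j % 2 = i₁ % 2 ∨ j % 2 = i₂ % 2 by omega) with h | h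
    · have hc1 := hcv i₁ (by omega)
      rw [← h] at hc1
      have heq' := hcol r (if j % 2 = 0 then x else y) _ hur _ hir hj2 hc1
      have := hinj j i₁ (by omega) (by omega) heq'
      omega
    · have hc2 := hcv i₂ (by omega)
      rw [← h] at hc2
      have heq' := hcol r (if j % 2 = 0 then x else y) _ hur _ hir' hj2 hc2
      have := hinj j i₂ (by omega) (by omega) heq'
      omega

private lemma core_lemma' {V C T : Type} {G : SimpleGraph V} (col : V → Set C)
    (x y : C) {v w : V} (P : G.Walk v w) (hP : P.IsPath)
    (halt : ∀ i ≤ P.length,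
      (i % 2 = 0 → x ∈ col (P.getVert i)) ∧ (i % 2 = 1 → y ∈ col (P.getVert i)))
    {tree : SimpleGraph T} {bag : T → Set V} (htd : IsTreeDecomp G tree bag)
    (hcol : ∀ (t : T) (c : C), ∀ u₁ ∈ bag t, ∀ u₂ ∈ bag t,
      c ∈ col u₁ → c ∈ col u₂ → u₁ = u₂)
    (t0 : T) (a j b : ℕ) (haj : a ≤ j) (hjb : j ≤ b) (hblen : b ≤ P.length)
    (ha : P.getVert a ∈ bag t0) (hb : P.getVert b ∈ bag t0) :
    P.getVert j ∈ bag t0 := by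
  obtain ⟨s₀, hs₀⟩ := htd.bag_vertex (P.getVert j)
  obtain ⟨ρ⟩ := htd.isTree.isConnected.preconnected t0 s₀
  exact core_lemma col x y P hP halt htd hcol ρ.length t0 a j b haj hjb hblen ha hb
    s₀ hs₀ ρ le_rfl

private lemma aux_lemma {V C T : Type} {G : SimpleGraph V} (col : V → Set C)
    (x y : C) {v w : V} (P : G.Walk v w) (hP : P.IsPath)
    (halt : ∀ i ≤ P.length,
      (i % 2 = 0 → x ∈ col (P.getVert i)) ∧ (i % 2 = 1 → y ∈ col (P.getVert i)))
    {tree : SimpleGraph T} {bag : T → Set V} (htd : IsTreeDecomp G tree bag)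
    (hcol : ∀ (t : T) (c : C), ∀ u₁ ∈ bag t, ∀ u₂ ∈ bag t,
      c ∈ col u₁ → c ∈ col u₂ → u₁ = u₂) :
    ∀ {B1 B2 : T} (q : tree.Walk B1 B2), q.IsPath →
      ∀ (a j b : ℕ), a ≤ j → j ≤ b → b ≤ P.length →
        P.getVert a ∈ bag B1 → P.getVert b ∈ bag B2 →
        ∃ t ∈ q.support, P.getVert j ∈ bag t := by
  intro B1 B2 q
  induction q with
  | @nil B0 =>
    intro _ a j b haj hjb hblen ha hbb
    exact ⟨B0, by simp, core_lemma' col x y P hP halt htd hcol B0 a j b haj hjb hblen ha hbb⟩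
  | @cons B1 c B2 h q' ih =>
    intro hq a j b haj hjb hblen ha hbb
    rw [SimpleGraph.Walk.cons_isPath_iff] at hq
    have hB2c : (tree.deleteEdges {s(B1, c)}).Reachable B2 c := by
      have hne : ∀ e ∈ q'.edges, e ∉ ({s(B1, c)} : Set (Sym2 T)) := by
        intro e he hmem
        rw [Set.mem_singleton_iff] at hmem
        subst hmem
        exact hq.2 (q'.fst_mem_support_of_mem_edges he)
      exact (q'.toDeleteEdges _ hne).reachable.symm
    have e1 : a + (b - a) = b := by omega
    obtain ⟨i₀, hai, hib, hiB1, hic⟩ := walk_crossA' htd h P (b - a) a (by omega)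
      ⟨B1, Reachable.refl _, ha⟩ (by rw [e1]; exact ⟨B2, hB2c, hbb⟩)
    rw [e1] at hib
    by_cases hji : j ≤ i₀
    · exact ⟨B1, by rw [SimpleGraph.Walk.support_cons]; exact List.mem_cons_self,
        core_lemma' col x y P hP halt htd hcol B1 a j i₀ haj hji (by omega) ha hiB1⟩
    · obtain ⟨t, ht, hmem⟩ := ih hq.1 i₀ j b (by omega) hjb hblen hic hbb
      exact ⟨t, by rw [SimpleGraph.Walk.support_cons]; exact List.mem_cons_of_mem _ ht, hmem⟩

/-- let `P` be a path in the multicolored graph `G` from `v` to `w` whose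
vertices alternately carry the two distinct colors `x` and `y`, and let `T` be a tree
decomposition in which every bag contains, for each color, at most one vertex carrying
that color.  If `B1` is a bag containing `v` and `B2` a bag containing `w`, then every
vertex of `P` lies in some bag on the (unique) path from `B1` to `B2` in the tree. -/
theorem path_vertices_in_bags_on_tree_path {V C T : Type}
    (G : SimpleGraph V) (col : V → Set C)
    (x y : C) (hxy : x ≠ y)
    {v w : V} (P : G.Walk v w) (hP : P.IsPath)
    (halt : ∀ i ≤ P.length,
      (i % 2 = 0 → x ∈ col (P.getVert i)) ∧ (i % 2 = 1 → y ∈ col (P.getVert i)))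
    (tree : SimpleGraph T) (bag : T → Set V)
    (htd : IsTreeDecomp G tree bag)
    (hcol : ∀ (t : T) (c : C), ∀ u₁ ∈ bag t, ∀ u₂ ∈ bag t,
      c ∈ col u₁ → c ∈ col u₂ → u₁ = u₂)
    {B1 B2 : T} (hB1 : v ∈ bag B1) (hB2 : w ∈ bag B2)
    (q : tree.Walk B1 B2) (hq : q.IsPath) :
    ∀ u ∈ P.support, ∃ t ∈ q.support, u ∈ bag t := by
  intro u hu
  obtain ⟨j, hj, hjl⟩ := SimpleGraph.Walk.mem_support_iff_exists_getVert.mp hu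
  rw [← hj]
  exact aux_lemma col x y P hP halt htd hcol q hq 0 j P.length (Nat.zero_le j) hjl le_rfl
    (by rw [P.getVert_zero]; exact hB1) (by rw [P.getVert_length]; exact hB2)
end

section
/- Let G be a multicolored graph containing a zipper chain (P,Q) such that some cycle of G fully contains both P and Q. Then in any properly multicolored triangulation of G there is no edge between two non-adjacent vertices of P (and, symmetrically, none between two non-adjacent vertices of Q). -/
/-- A zipper chain in the multicolored graph `G` with coloring `col`: two vertex-disjoint
induced paths `p 1, …, p plen` and `q 1, …, q qlen` (1-based indexing), multicolored with
7 distinct colors `a`, `bP`, `bQ` and `c 1, c 2, c 3, c 0` (where `c r` for `r : ZMod 4`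
stands for the paper's `c_j` with `j ≡ r (mod 4)`): the vertex `p i` carries `a` if `i` is
odd and `bP` if `i` is even, together with `c i`; the vertex `q i` carries `a` if `i` is
even and `bQ` if `i` is odd, together with `c (i+2)`. -/
structure ZipperChain {V C : Type} (G : SimpleGraph V) (col : V → Set C) where
  a : C
  bP : C
  bQ : C
  c : ZMod 4 → C
  distinct : ([a, bP, bQ, c 0, c 1, c 2, c 3] : List C).Nodup
  plen : ℕ
  qlen : ℕ
  plen_pos : 1 ≤ plen
  qlen_pos : 1 ≤ qlen
  p : ℕ → V
  q : ℕ → V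
  p_inj : ∀ i j, 1 ≤ i → i ≤ plen → 1 ≤ j → j ≤ plen → p i = p j → i = j
  q_inj : ∀ i j, 1 ≤ i → i ≤ qlen → 1 ≤ j → j ≤ qlen → q i = q j → i = j
  pq_disjoint : ∀ i j, 1 ≤ i → i ≤ plen → 1 ≤ j → j ≤ qlen → p i ≠ q j
  p_adj : ∀ i, 1 ≤ i → i + 1 ≤ plen → G.Adj (p i) (p (i + 1))
  q_adj : ∀ i, 1 ≤ i → i + 1 ≤ qlen → G.Adj (q i) (q (i + 1))
  p_induced : ∀ i j, 1 ≤ i → i ≤ plen → 1 ≤ j → j ≤ plen →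
    G.Adj (p i) (p j) → i = j + 1 ∨ j = i + 1
  q_induced : ∀ i j, 1 ≤ i → i ≤ qlen → 1 ≤ j → j ≤ qlen →
    G.Adj (q i) (q j) → i = j + 1 ∨ j = i + 1
  col_p : ∀ i, 1 ≤ i → i ≤ plen →
    col (p i) = {(if i % 2 = 1 then a else bP), c (i : ZMod 4)}
  col_q : ∀ i, 1 ≤ i → i ≤ qlen →
    col (q i) = {(if i % 2 = 0 then a else bQ), c ((i : ZMod 4) + 2)}

/-- Some cycle of `G` fully contains both paths of the zipper chain. -/
def ZipperChain.InCycle {V C : Type} {G : SimpleGraph V} {col : V → Set C}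
    (zc : ZipperChain G col) : Prop :=
  ∃ (v : V) (w : G.Walk v v), w.IsCycle ∧
    (∀ i, 1 ≤ i → i ≤ zc.plen → zc.p i ∈ w.support) ∧
    (∀ j, 1 ≤ j → j ≤ zc.qlen → zc.q j ∈ w.support)

/-- The `ℓ`-th tooth of `P` and the `m`-th tooth of `Q` (1-based; the `ℓ`-th tooth of `P`
consists of the vertices `p i` with `4ℓ-3 ≤ i ≤ 4ℓ`) are locked together in `H`: `H` has
an edge between a vertex of the first tooth and a vertex of the second tooth such that at
least one endpoint carries the color `a`. -/
def ZipperChain.Locked {V C : Type} {G : SimpleGraph V} {col : V → Set C}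
    (zc : ZipperChain G col) (H : SimpleGraph V) (ℓ m : ℕ) : Prop :=
  ∃ i j : ℕ, 1 ≤ i ∧ 4 * ℓ - 3 ≤ i ∧ i ≤ 4 * ℓ ∧ i ≤ zc.plen ∧
    1 ≤ j ∧ 4 * m - 3 ≤ j ∧ j ≤ 4 * m ∧ j ≤ zc.qlen ∧
    H.Adj (zc.p i) (zc.q j) ∧ (zc.a ∈ col (zc.p i) ∨ zc.a ∈ col (zc.q j))

namespace ZipperAux

open SimpleGraph

variable {V : Type} {H : SimpleGraph V}

/-- Walk along `p i, p (i+1), …, p (i+n)`. -/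
def walkUp (H : SimpleGraph V) (p : ℕ → V) (i : ℕ) :
    (n : ℕ) → (∀ k, k < n → H.Adj (p (i + k)) (p (i + k + 1))) → H.Walk (p i) (p (i + n))
  | 0, _ => Walk.nil
  | n + 1, h => (walkUp H p i n (fun k hk => h k (by omega))).concat (h n (by omega))

lemma walkUp_support (p : ℕ → V) (i n : ℕ) (h : ∀ k, k < n → H.Adj (p (i + k)) (p (i + k + 1))) :
    (walkUp H p i n h).support = (List.range (n + 1)).map (fun k => p (i + k)) := by
  induction n with
  | zero => simp [walkUp, List.range_succ]
  | succ n ih =>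
      rw [walkUp, Walk.support_concat, ih, List.range_succ (n := n + 1)]
      simp

lemma walkUp_edges (p : ℕ → V) (i n : ℕ) (h : ∀ k, k < n → H.Adj (p (i + k)) (p (i + k + 1))) :
    (walkUp H p i n h).edges = (List.range n).map (fun k => s(p (i + k), p (i + k + 1))) := by
  induction n with
  | zero => simp [walkUp]
  | succ n ih =>
      rw [walkUp, Walk.edges_concat, ih, List.range_succ (n := n)]
      simp only [List.map_append, List.map_cons, List.map_nil, List.concat_eq_append]
      rfl

lemma walkUp_length (p : ℕ → V) (i n : ℕ) (h : ∀ k, k < n → H.Adj (p (i + k)) (p (i + k + 1))) :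
    (walkUp H p i n h).length = n := by
  induction n with
  | zero => rfl
  | succ n ih => rw [walkUp, Walk.length_concat, ih]

/-- Key lemma: an `H`-path with no same-parity `H`-edges is induced in a chordal `H`. -/
lemma induced_of_chordal (hchord : IsChordal H)
    (p : ℕ → V) (len : ℕ)
    (hinj : ∀ i j, 1 ≤ i → i ≤ len → 1 ≤ j → j ≤ len → p i = p j → i = j)
    (hadj : ∀ i, 1 ≤ i → i + 1 ≤ len → H.Adj (p i) (p (i + 1)))
    (hpar : ∀ i j, 1 ≤ i → i ≤ len → 1 ≤ j → j ≤ len → i % 2 = j % 2 → ¬ H.Adj (p i) (p j)) :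
    ∀ i j, 1 ≤ i → i ≤ len → 1 ≤ j → j ≤ len → H.Adj (p i) (p j) → i = j + 1 ∨ j = i + 1 := by
  have key : ∀ d i j, 1 ≤ i → j ≤ len → i + 2 ≤ j → j - i ≤ d → ¬ H.Adj (p i) (p j) := by
    intro d
    induction d with
    | zero => intro i j _ _ h1 h2; omega
    | succ d ih =>
        intro i j hi1 hjlen hij hd hadjij
        by_cases hsmall : j - i ≤ d
        · exact ih i j hi1 hjlen hij hsmall hadjij
        have hdij : j - i = d + 1 := by omega
        by_cases hpar2 : (j - i) % 2 = 0
        · exact hpar i j hi1 (by omega) (by omega) hjlen (by omega) hadjij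
        -- j - i is odd and ≥ 2, hence ≥ 3
        have h3 : i + 3 ≤ j := by omega
        set n := j - i with hn
        have hin : i + n = j := by omega
        have hseg : ∀ k, k < n → H.Adj (p (i + k)) (p (i + k + 1)) := by
          intro k hk
          exact hadj (i + k) (by omega) (by omega)
        set W : H.Walk (p i) (p (i + n)) := walkUp H p i n hseg with hW
        have hWsupp := walkUp_support (H := H) p i n hseg
        have hWedges := walkUp_edges (H := H) p i n hseg
        -- relocate endpoint
        have hadjji : H.Adj (p (i + n)) (p i) := by rw [hin]; exact hadjij.symm
        set c : H.Walk (p (i + n)) (p (i + n)) := Walk.cons hadjji W with hc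
        -- c is a cycle
        have hpathW : W.IsPath := by
          apply Walk.IsPath.mk'
          rw [hWsupp]
          refine List.Nodup.map_on ?_ List.nodup_range
          intro x hx y hy hxy
          rw [List.mem_range] at hx hy
          have := hinj (i + x) (i + y) (by omega) (by omega) (by omega) (by omega) hxy
          omega
        have hnotedge : s(p (i + n), p i) ∉ W.edges := by
          rw [hWedges]
          intro hmem
          rw [List.mem_map] at hmem
          obtain ⟨k, hk, hkeq⟩ := hmem
          rw [List.mem_range] at hk
          rw [Sym2.eq_iff] at hkeq
          rcases hkeq with ⟨h1, h2⟩ | ⟨h1, h2⟩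
          · have := hinj (i + n) (i + k) (by omega) (by omega) (by omega) (by omega) h1.symm
            have := hinj i (i + k + 1) (by omega) (by omega) (by omega) (by omega) h2.symm
            omega
          · have := hinj i (i + k) (by omega) (by omega) (by omega) (by omega) h1.symm
            have := hinj (i + n) (i + k + 1) (by omega) (by omega) (by omega) (by omega) h2.symm
            omega
        have hcyc : c.IsCycle := (Walk.cons_isCycle_iff W hadjji).mpr ⟨hpathW, hnotedge⟩
        have hlen : 4 ≤ c.length := by
          rw [hc, Walk.length_cons, hW, walkUp_length]
          omega
        obtain ⟨u, w, hu, hw, huw, hne⟩ := hchord c hcyc hlen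
        -- u and w lie on the path
        have hsupp_c : c.support = p (i + n) :: W.support := by rw [hc, Walk.support_cons]
        have hedges_c : c.edges = s(p (i + n), p i) :: W.edges := by rw [hc, Walk.edges_cons]
        have hmemW : ∀ x : V, x ∈ c.support → ∃ k, k ≤ n ∧ x = p (i + k) := by
          intro x hx
          rw [hsupp_c] at hx
          rcases List.mem_cons.mp hx with hx | hx
          · exact ⟨n, le_refl n, hx⟩
          · rw [hWsupp, List.mem_map] at hx
            obtain ⟨k, hk, hkeq⟩ := hx
            rw [List.mem_range] at hk
            exact ⟨k, by omega, hkeq.symm⟩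
        obtain ⟨k, hk, hku⟩ := hmemW u hu
        obtain ⟨l, hl, hlw⟩ := hmemW w hw
        rw [hku, hlw] at huw hne
        have main : ∀ k l : ℕ, k ≤ n → l ≤ n → k < l → H.Adj (p (i + k)) (p (i + l)) →
            s(p (i + k), p (i + l)) ∉ c.edges → False := by
          intro k l hk hl hklt hadjkl hnemem
          -- not consecutive
          have hnotcons : l ≠ k + 1 := by
            intro hcons
            apply hnemem
            subst hcons
            rw [hedges_c, hWedges]
            exact List.mem_cons_of_mem _ (List.mem_map.mpr
              ⟨k, List.mem_range.mpr (by omega), rfl⟩)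
          -- not the full chord
          have hnotfull : ¬ (k = 0 ∧ l = n) := by
            rintro ⟨hk0, hln⟩
            apply hnemem
            rw [hedges_c, hk0, hln]
            exact List.mem_cons.mpr (Or.inl (Sym2.eq_swap))
          exact ih (i + k) (i + l) (by omega) (by omega) (by omega) (by omega) hadjkl
        rcases Nat.lt_trichotomy k l with hklt | heq | hgt
        · exact main k l hk hl hklt huw hne
        · rw [heq] at huw; exact huw.ne rfl
        · refine main l k hl hk hgt huw.symm ?_
          rwa [Sym2.eq_swap] at hne
  intro i j hi1 hilen hj1 hjlen hadjij
  rcases Nat.lt_trichotomy i j with hlt | heq | hgt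
  · by_cases h2 : j = i + 1
    · right; exact h2
    · exact absurd hadjij (key (j - i) i j hi1 hjlen (by omega) (le_refl _))
  · exact absurd rfl (heq ▸ hadjij.ne)
  · by_cases h2 : i = j + 1
    · left; exact h2
    · exact absurd hadjij.symm (key (i - j) j i hj1 hilen (by omega) (le_refl _))

end ZipperAux

/-- if a zipper chain `(P,Q)` of `G` is fully contained in a cycle of `G`,
then no properly multicolored triangulation `H` of `G` has an edge between two
non-adjacent vertices of `P`, nor between two non-adjacent vertices of `Q`. -/
theorem zipper_no_internal_chord {V C : Type} (G : SimpleGraph V) (col : V → Set C)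
    (zc : ZipperChain G col) (hcyc : zc.InCycle)
    (H : SimpleGraph V) (hGH : G ≤ H) (hchord : IsChordal H)
    (hproper : ProperlyMulticolored H col) :
    (∀ i j, 1 ≤ i → i ≤ zc.plen → 1 ≤ j → j ≤ zc.plen →
      H.Adj (zc.p i) (zc.p j) → i = j + 1 ∨ j = i + 1) ∧
    (∀ i j, 1 ≤ i → i ≤ zc.qlen → 1 ≤ j → j ≤ zc.qlen →
      H.Adj (zc.q i) (zc.q j) → i = j + 1 ∨ j = i + 1) := by
  have hparP : ∀ i j, 1 ≤ i → i ≤ zc.plen → 1 ≤ j → j ≤ zc.plen → i % 2 = j % 2 →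
      ¬ H.Adj (zc.p i) (zc.p j) := by
    intro i j hi1 hilen hj1 hjlen hpar hadj
    have hd := hproper hadj
    have hci := zc.col_p i hi1 hilen
    have hcj := zc.col_p j hj1 hjlen
    by_cases h : i % 2 = 1
    · have hj : j % 2 = 1 := by omega
      have hai : zc.a ∈ col (zc.p i) := by rw [hci]; simp [h]
      have haj : zc.a ∈ col (zc.p j) := by rw [hcj]; simp [hj]
      exact Set.disjoint_left.mp hd hai haj
    · have hj : ¬ j % 2 = 1 := by omega
      have hai : zc.bP ∈ col (zc.p i) := by rw [hci]; simp [h]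
      have haj : zc.bP ∈ col (zc.p j) := by rw [hcj]; simp [hj]
      exact Set.disjoint_left.mp hd hai haj
  have hparQ : ∀ i j, 1 ≤ i → i ≤ zc.qlen → 1 ≤ j → j ≤ zc.qlen → i % 2 = j % 2 →
      ¬ H.Adj (zc.q i) (zc.q j) := by
    intro i j hi1 hilen hj1 hjlen hpar hadj
    have hd := hproper hadj
    have hci := zc.col_q i hi1 hilen
    have hcj := zc.col_q j hj1 hjlen
    by_cases h : i % 2 = 0
    · have hj : j % 2 = 0 := by omega
      have hai : zc.a ∈ col (zc.q i) := by rw [hci]; simp [h]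
      have haj : zc.a ∈ col (zc.q j) := by rw [hcj]; simp [hj]
      exact Set.disjoint_left.mp hd hai haj
    · have hj : ¬ j % 2 = 0 := by omega
      have hai : zc.bQ ∈ col (zc.q i) := by rw [hci]; simp [h]
      have haj : zc.bQ ∈ col (zc.q j) := by rw [hcj]; simp [hj]
      exact Set.disjoint_left.mp hd hai haj
  exact ⟨ZipperAux.induced_of_chordal hchord zc.p zc.plen zc.p_inj
      (fun i h1 h2 => hGH (zc.p_adj i h1 h2)) hparP,
    ZipperAux.induced_of_chordal hchord zc.q zc.qlen zc.q_inj
      (fun i h1 h2 => hGH (zc.q_adj i h1 h2)) hparQ⟩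
end

section
/- Let G be a multicolored graph containing a zipper chain (P,Q) such that some cycle of G fully contains both P and Q, and consider any properly multicolored triangulation of G. If the triangulation contains two edges between P and Q that share a common endpoint p in P, then p is adjacent in the triangulation to every vertex of Q lying between the other two endpoints on Q. -/
section Aux

open SimpleGraph

variable {V C : Type} {G : SimpleGraph V} {col : V → Set C}

/-- The walk in `H ≥ G` along `Q` from `q j` to `q (j+d)`. -/
def ZipperChain.qwalk (zc : ZipperChain G col) (H : SimpleGraph V) (hGH : G ≤ H)
    (j : ℕ) (hj : 1 ≤ j) : (d : ℕ) → j + d ≤ zc.qlen → H.Walk (zc.q j) (zc.q (j + d))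
  | 0, _ => SimpleGraph.Walk.nil
  | d + 1, h => (zc.qwalk H hGH j hj d (by omega)).concat
      (hGH (zc.q_adj (j + d) (by omega) (by omega)))

lemma ZipperChain.qwalk_length (zc : ZipperChain G col) (H : SimpleGraph V) (hGH : G ≤ H)
    (j : ℕ) (hj : 1 ≤ j) : ∀ (d : ℕ) (h : j + d ≤ zc.qlen),
    (zc.qwalk H hGH j hj d h).length = d
  | 0, _ => rfl
  | d + 1, h => by
    rw [ZipperChain.qwalk, SimpleGraph.Walk.length_concat,
      zc.qwalk_length H hGH j hj d (by omega)]

lemma ZipperChain.qwalk_support (zc : ZipperChain G col) (H : SimpleGraph V) (hGH : G ≤ H)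
    (j : ℕ) (hj : 1 ≤ j) : ∀ (d : ℕ) (h : j + d ≤ zc.qlen) (x : V),
    x ∈ (zc.qwalk H hGH j hj d h).support ↔ ∃ k, k ≤ d ∧ x = zc.q (j + k)
  | 0, h, x => by
    simp only [ZipperChain.qwalk, SimpleGraph.Walk.support_nil, List.mem_singleton]
    constructor
    · rintro rfl; exact ⟨0, le_rfl, rfl⟩
    · rintro ⟨k, hk, rfl⟩
      obtain rfl : k = 0 := by omega
      rfl
  | d + 1, h, x => by
    rw [ZipperChain.qwalk]
    simp only [SimpleGraph.Walk.support_concat, List.concat_eq_append, List.mem_append,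
      List.mem_singleton, zc.qwalk_support H hGH j hj d (by omega)]
    constructor
    · rintro (⟨k, hk, rfl⟩ | rfl)
      · exact ⟨k, by omega, rfl⟩
      · exact ⟨d + 1, le_rfl, rfl⟩
    · rintro ⟨k, hk, rfl⟩
      rcases Nat.lt_or_ge k (d + 1) with hk' | hk'
      · exact Or.inl ⟨k, by omega, rfl⟩
      · have : k = d + 1 := by omega
        subst this; exact Or.inr rfl

lemma ZipperChain.qwalk_edges (zc : ZipperChain G col) (H : SimpleGraph V) (hGH : G ≤ H)
    (j : ℕ) (hj : 1 ≤ j) : ∀ (d : ℕ) (h : j + d ≤ zc.qlen) (e : Sym2 V),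
    e ∈ (zc.qwalk H hGH j hj d h).edges ↔ ∃ k, k < d ∧ e = s(zc.q (j + k), zc.q (j + k + 1))
  | 0, h, e => by
    simp [ZipperChain.qwalk]
  | d + 1, h, e => by
    rw [ZipperChain.qwalk]
    simp only [SimpleGraph.Walk.edges_concat, List.concat_eq_append, List.mem_append,
      List.mem_singleton, zc.qwalk_edges H hGH j hj d (by omega)]
    constructor
    · rintro (⟨k, hk, rfl⟩ | rfl)
      · exact ⟨k, by omega, rfl⟩
      · exact ⟨d, by omega, rfl⟩
    · rintro ⟨k, hk, rfl⟩
      rcases Nat.lt_or_ge k d with hk' | hk'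
      · exact Or.inl ⟨k, hk', rfl⟩
      · have : k = d := by omega
        subst this; exact Or.inr rfl

lemma ZipperChain.qwalk_isPath (zc : ZipperChain G col) (H : SimpleGraph V) (hGH : G ≤ H)
    (j : ℕ) (hj : 1 ≤ j) : ∀ (d : ℕ) (h : j + d ≤ zc.qlen),
    (zc.qwalk H hGH j hj d h).IsPath
  | 0, h => by simp [ZipperChain.qwalk]
  | d + 1, h => by
    rw [ZipperChain.qwalk, SimpleGraph.Walk.isPath_def, SimpleGraph.Walk.support_concat,
      ← List.concat_eq_append]
    refine List.Nodup.concat ?_ (zc.qwalk_isPath H hGH j hj d (by omega)).support_nodup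
    rw [zc.qwalk_support H hGH j hj d (by omega)]
    rintro ⟨k, hk, hx⟩
    have := zc.q_inj _ _ (by omega) (by omega) (by omega) (by omega) hx
    omega

end Aux

section Aux2

open SimpleGraph

variable {V C : Type} {G : SimpleGraph V} {col : V → Set C}

/-- Two vertices of `Q` whose indices have the same parity share a color,
so they are nonadjacent in any properly multicolored `H`. -/
lemma ZipperChain.q_even_not_adj (zc : ZipperChain G col) (H : SimpleGraph V)
    (hproper : ProperlyMulticolored H col) {k k' : ℕ}
    (hk : 1 ≤ k) (hk2 : k ≤ zc.qlen) (hk' : 1 ≤ k') (hk'2 : k' ≤ zc.qlen)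
    (hpar : k % 2 = k' % 2) (hadj : H.Adj (zc.q k) (zc.q k')) : False := by
  have hd := hproper hadj
  rw [zc.col_q k hk hk2, zc.col_q k' hk' hk'2, hpar] at hd
  exact Set.not_disjoint_iff.2
    ⟨(if k' % 2 = 0 then zc.a else zc.bQ), Set.mem_insert _ _, Set.mem_insert _ _⟩ hd

/-- `H` has no edge between vertices of `Q` at distance at least 2. -/
lemma ZipperChain.no_far_q (zc : ZipperChain G col) (H : SimpleGraph V) (hGH : G ≤ H)
    (hchord : IsChordal H) (hproper : ProperlyMulticolored H col) :
    ∀ d k : ℕ, 1 ≤ k → k + d ≤ zc.qlen → 2 ≤ d → ¬ H.Adj (zc.q k) (zc.q (k + d)) := by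
  intro d
  induction d using Nat.strong_induction_on with
  | _ d IH =>
    intro k hk hkd hd2 hadj
    rcases Nat.even_or_odd d with he | ho
    · have hem := Nat.even_iff.mp he
      exact zc.q_even_not_adj H hproper hk (by omega) (by omega) hkd (by omega) hadj
    · -- d odd, d ≥ 3
      have hd3 : 3 ≤ d := by rcases ho with ⟨m, hm⟩; omega
      set w := zc.qwalk H hGH k hk d hkd with hw
      have hwp : w.IsPath := zc.qwalk_isPath H hGH k hk d hkd
      have hclose : ¬ s(zc.q (k + d), zc.q k) ∈ w.edges := by
        rw [hw, zc.qwalk_edges H hGH k hk d hkd]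
        rintro ⟨k₀, hk₀, he⟩
        rw [Sym2.eq_iff] at he
        rcases he with ⟨h1, h2⟩ | ⟨h1, h2⟩
        · have e1 := zc.q_inj _ _ (by omega) (by omega) (by omega) (by omega) h1
          have e2 := zc.q_inj _ _ (by omega) (by omega) (by omega) (by omega) h2
          omega
        · have e1 := zc.q_inj _ _ (by omega) (by omega) (by omega) (by omega) h1
          have e2 := zc.q_inj _ _ (by omega) (by omega) (by omega) (by omega) h2
          omega
      have hcyc : (Walk.cons hadj.symm w).IsCycle :=
        (Walk.cons_isCycle_iff w hadj.symm).2 ⟨hwp, hclose⟩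
      have hlen : 4 ≤ (Walk.cons hadj.symm w).length := by
        rw [Walk.length_cons, hw, zc.qwalk_length]; omega
      obtain ⟨u, v, hu, hv, hadj', hne⟩ := hchord _ hcyc hlen
      rw [Walk.support_cons, List.mem_cons, hw, zc.qwalk_support] at hu hv
      have hu' : ∃ a, a ≤ d ∧ u = zc.q (k + a) := by
        rcases hu with rfl | h; exacts [⟨d, le_rfl, rfl⟩, h]
      have hv' : ∃ b, b ≤ d ∧ v = zc.q (k + b) := by
        rcases hv with rfl | h; exacts [⟨d, le_rfl, rfl⟩, h]
      obtain ⟨a, ha, rfl⟩ := hu'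
      obtain ⟨b, hb, rfl⟩ := hv'
      have hedges : ∀ e, e ∈ (Walk.cons hadj.symm w).edges ↔
          e = s(zc.q (k + d), zc.q k) ∨ ∃ k₀, k₀ < d ∧ e = s(zc.q (k + k₀), zc.q (k + k₀ + 1)) := by
        intro e
        rw [Walk.edges_cons, List.mem_cons, hw, zc.qwalk_edges]
      -- a ≠ b
      have hab : a ≠ b := by
        rintro rfl; exact H.irrefl hadj'
      -- wlog a < b
      have key : ∀ a b : ℕ, a ≤ d → b ≤ d → a < b →
          H.Adj (zc.q (k + a)) (zc.q (k + b)) →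
          s(zc.q (k + a), zc.q (k + b)) ∉ (Walk.cons hadj.symm w).edges → False := by
        intro a b ha hb hab hadj' hne
        rcases Nat.lt_or_ge (b - a) 2 with hsm | hbig
        · -- b = a + 1 : an edge of the walk
          have : b = a + 1 := by omega
          subst this
          exact hne ((hedges _).2 (Or.inr ⟨a, by omega, rfl⟩))
        · rcases Nat.even_or_odd (b - a) with he' | ho'
          · have hem := Nat.even_iff.mp he'
            exact zc.q_even_not_adj H hproper (by omega) (by omega) (by omega) (by omega)
              (by omega) hadj'
          · rcases Nat.lt_or_ge (b - a) d with hlt' | hge'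
            · have := IH (b - a) hlt' (k + a) (by omega) (by omega) (by omega)
              have hba : k + a + (b - a) = k + b := by omega
              rw [hba] at this
              exact this hadj'
            · -- b - a = d, so a = 0, b = d : the closing edge
              have ha0 : a = 0 := by omega
              have hbd : b = d := by omega
              subst ha0; subst hbd
              refine hne ((hedges _).2 (Or.inl ?_))
              rw [Sym2.eq_swap]
              rfl
      rcases Nat.lt_or_ge a b with h' | h'
      · exact key a b ha hb h' hadj' hne
      · have h'' : b < a := by omega
        refine key b a hb ha h'' hadj'.symm ?_
        rwa [Sym2.eq_swap]

end Aux2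

section Main

open SimpleGraph

variable {V C : Type} {G : SimpleGraph V} {col : V → Set C}

lemma ZipperChain.main_aux (zc : ZipperChain G col) (H : SimpleGraph V) (hGH : G ≤ H)
    (hchord : IsChordal H) (hproper : ProperlyMulticolored H col) :
    ∀ d i j₁ : ℕ, 1 ≤ i → i ≤ zc.plen → 1 ≤ j₁ → j₁ + d ≤ zc.qlen →
      H.Adj (zc.p i) (zc.q j₁) → H.Adj (zc.p i) (zc.q (j₁ + d)) →
      ∀ k, 0 < k → k < d → H.Adj (zc.p i) (zc.q (j₁ + k)) := by
  intro d
  induction d using Nat.strong_induction_on with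
  | _ d IH =>
    intro i j₁ hi hip hj₁ hjd h₁ h₂ k hk0 hkd
    have hd2 : 2 ≤ d := by omega
    set w := zc.qwalk H hGH j₁ hj₁ d hjd with hw
    have hwp : w.IsPath := zc.qwalk_isPath H hGH j₁ hj₁ d hjd
    have hpnotin : zc.p i ∉ w.support := by
      rw [hw, zc.qwalk_support]
      rintro ⟨k₀, hk₀, hx⟩
      exact zc.pq_disjoint i (j₁ + k₀) hi hip (by omega) (by omega) hx
    have hpath : (Walk.cons h₁ w).IsPath := (Walk.cons_isPath_iff h₁ w).2 ⟨hwp, hpnotin⟩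
    have hclose : ¬ s(zc.q (j₁ + d), zc.p i) ∈ (Walk.cons h₁ w).edges := by
      rw [Walk.edges_cons, List.mem_cons, hw, zc.qwalk_edges]
      rintro (he | ⟨k₀, hk₀, he⟩) <;> rw [Sym2.eq_iff] at he
      · rcases he with ⟨h1, h2⟩ | ⟨h1, h2⟩
        · exact zc.pq_disjoint i (j₁ + d) hi hip (by omega) (by omega) h1.symm
        · have := zc.q_inj _ _ (by omega) (by omega) (by omega) (by omega) h1
          omega
      · rcases he with ⟨h1, h2⟩ | ⟨h1, h2⟩
        · exact zc.pq_disjoint i (j₁ + k₀ + 1) hi hip (by omega) (by omega) h2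
        · exact zc.pq_disjoint i (j₁ + k₀) hi hip (by omega) (by omega) h2
    have hcyc : (Walk.cons h₂.symm (Walk.cons h₁ w)).IsCycle :=
      (Walk.cons_isCycle_iff _ h₂.symm).2 ⟨hpath, hclose⟩
    have hlen : 4 ≤ (Walk.cons h₂.symm (Walk.cons h₁ w)).length := by
      rw [Walk.length_cons, Walk.length_cons, hw, zc.qwalk_length]; omega
    obtain ⟨u, v, hu, hv, hadj', hne⟩ := hchord _ hcyc hlen
    have hedges : ∀ e, e ∈ (Walk.cons h₂.symm (Walk.cons h₁ w)).edges ↔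
        e = s(zc.q (j₁ + d), zc.p i) ∨ e = s(zc.p i, zc.q j₁) ∨
        ∃ k₀, k₀ < d ∧ e = s(zc.q (j₁ + k₀), zc.q (j₁ + k₀ + 1)) := by
      intro e
      rw [Walk.edges_cons, Walk.edges_cons, List.mem_cons, List.mem_cons, hw, zc.qwalk_edges]
    have hsupp : ∀ x, x ∈ (Walk.cons h₂.symm (Walk.cons h₁ w)).support →
        x = zc.p i ∨ ∃ a, a ≤ d ∧ x = zc.q (j₁ + a) := by
      intro x hx
      rw [Walk.support_cons, Walk.support_cons, List.mem_cons, List.mem_cons, hw,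
        zc.qwalk_support] at hx
      rcases hx with rfl | rfl | h
      · exact Or.inr ⟨d, le_rfl, rfl⟩
      · exact Or.inl rfl
      · exact Or.inr h
    -- case analysis on the chord endpoints
    -- helper when the chord is a q-q pair
    have qq : ∀ a b : ℕ, a ≤ d → b ≤ d → a < b →
        H.Adj (zc.q (j₁ + a)) (zc.q (j₁ + b)) →
        s(zc.q (j₁ + a), zc.q (j₁ + b)) ∉ (Walk.cons h₂.symm (Walk.cons h₁ w)).edges → False := by
      intro a b ha hb hab hadj'' hne''
      rcases Nat.lt_or_ge (b - a) 2 with hsm | hbig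
      · have : b = a + 1 := by omega
        subst this
        exact hne'' ((hedges _).2 (Or.inr (Or.inr ⟨a, by omega, rfl⟩)))
      · have := zc.no_far_q H hGH hchord hproper (b - a) (j₁ + a) (by omega) (by omega) hbig
        have hba : j₁ + a + (b - a) = j₁ + b := by omega
        rw [hba] at this
        exact this hadj''
    -- helper when the chord is p i -- q (j₁ + a)
    have pq : ∀ a : ℕ, a ≤ d → H.Adj (zc.p i) (zc.q (j₁ + a)) →
        s(zc.p i, zc.q (j₁ + a)) ∉ (Walk.cons h₂.symm (Walk.cons h₁ w)).edges →
        0 < a ∧ a < d := by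
      intro a ha hadj'' hne''
      constructor
      · rcases Nat.eq_zero_or_pos a with rfl | h
        · exact absurd ((hedges _).2 (Or.inr (Or.inl rfl))) hne''
        · exact h
      · rcases Nat.lt_or_ge a d with h | h
        · exact h
        · have : a = d := by omega
          subst this
          refine absurd ((hedges _).2 (Or.inl ?_)) hne''
          rw [Sym2.eq_swap]
    -- get a chord of the form p i -- q (j₁ + a) with 0 < a < d
    have main : ∃ a, 0 < a ∧ a < d ∧ H.Adj (zc.p i) (zc.q (j₁ + a)) := by
      rcases hsupp u hu with rfl | ⟨a, ha, rfl⟩ <;> rcases hsupp v hv with h' | ⟨b, hb, h'⟩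
      · rw [h'] at hadj'
        exact absurd rfl (H.ne_of_adj hadj') -- u = v = p i
      · subst h'
        obtain ⟨h1, h2⟩ := pq b hb hadj' hne
        exact ⟨b, h1, h2, hadj'⟩
      · subst h'
        obtain ⟨h1, h2⟩ := pq a ha hadj'.symm (by rwa [Sym2.eq_swap] at hne)
        exact ⟨a, h1, h2, hadj'.symm⟩
      · subst h'
        rcases Nat.lt_trichotomy a b with h' | h' | h'
        · exact absurd (qq a b ha hb h' hadj' hne) id
        · subst h'; exact absurd rfl (H.ne_of_adj hadj')
        · exact absurd (qq b a hb ha h' hadj'.symm (by rwa [Sym2.eq_swap] at hne)) id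
    obtain ⟨a, ha0, had, hadj''⟩ := main
    rcases Nat.lt_trichotomy k a with h' | h' | h'
    · exact IH a had i j₁ hi hip hj₁ (by omega) h₁ hadj'' k hk0 h'
    · subst h'; exact hadj''
    · have h₂' : H.Adj (zc.p i) (zc.q (j₁ + a + (d - a))) := by
        have : j₁ + a + (d - a) = j₁ + d := by omega
        rw [this]; exact h₂
      have := IH (d - a) (by omega) i (j₁ + a) hi hip (by omega) (by omega) hadj'' h₂'
        (k - a) (by omega) (by omega)
      have hba : j₁ + a + (k - a) = j₁ + k := by omega
      rwa [hba] at this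

end Main

/-- if a properly multicolored triangulation `H` of `G` contains two edges
between `P` and `Q` sharing the common endpoint `p i` in `P`, with the other endpoints
`q j₁` and `q j₂` (`j₁ < j₂`), then `p i` is adjacent in `H` to every vertex of `Q`
lying between `q j₁` and `q j₂`. -/
theorem zipper_convex {V C : Type} (G : SimpleGraph V) (col : V → Set C)
    (zc : ZipperChain G col) (hcyc : zc.InCycle)
    (H : SimpleGraph V) (hGH : G ≤ H) (hchord : IsChordal H)
    (hproper : ProperlyMulticolored H col)
    (i j₁ j₂ : ℕ) (hi : 1 ≤ i) (hip : i ≤ zc.plen)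
    (hj₁ : 1 ≤ j₁) (hj₂ : j₂ ≤ zc.qlen) (hlt : j₁ < j₂)
    (h₁ : H.Adj (zc.p i) (zc.q j₁)) (h₂ : H.Adj (zc.p i) (zc.q j₂)) :
    ∀ j, j₁ < j → j < j₂ → H.Adj (zc.p i) (zc.q j) := by
  intro j hj1 hj2
  have := zc.main_aux H hGH hchord hproper (j₂ - j₁) i j₁ hi hip hj₁ (by omega) h₁
    (by have : j₁ + (j₂ - j₁) = j₂ := by omega
        rw [this]; exact h₂)
    (j - j₁) (by omega) (by omega)
  have hj : j₁ + (j - j₁) = j := by omega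
  rwa [hj] at this
end

section
/- Let G be a multicolored graph with color set of size k, and construct the colored graph G' as follows: for each vertex v of G with color set of size k_v, G' contains a clique C_v of k_v vertices, each colored with a distinct color from v's color set; and for each edge (v,w) of G, G' contains all edges between C_v and C_w. Then G admits a properly multicolored triangulation if and only if G' admits a properly colored triangulation. Moreover, G' has at most k·|V(G)| vertices and uses the same k colors. -/
/-- The vertex set of the colored graph `G'` built from the multicolored graph `G`:
for each vertex `v` of `G`, one vertex `(v, c)` for each color `c` in `v`'s color set
(these form the clique `C_v`); the vertex `(v, c)` is colored `c`. -/
def SplitVert {V C : Type} (col : V → Finset C) : Type := {p : V × C // p.2 ∈ col p.1}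

/-- The colored graph `G'`: inside each clique `C_v` all vertices are pairwise adjacent,
and for every edge `(v, w)` of `G` all edges between `C_v` and `C_w` are present. -/
def SplitGraph {V C : Type} (G : SimpleGraph V) (col : V → Finset C) :
    SimpleGraph (SplitVert col) :=
  SimpleGraph.fromRel fun p q =>
    (p.1.1 = q.1.1 ∧ p.1.2 ≠ q.1.2) ∨ G.Adj p.1.1 q.1.1

instance instFintypeSplitVert {V C : Type} [Fintype V] [Fintype C] [DecidableEq C]
    (col : V → Finset C) : Fintype (SplitVert col) :=
  Subtype.fintype fun p : V × C => p.2 ∈ col p.1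

namespace CT

open SimpleGraph

variable {α β : Type} {A : SimpleGraph α} {B : SimpleGraph β}

lemma getVert_mem_support {u v : α} (p : A.Walk u v) {i : ℕ} (hi : i ≤ p.length) :
    p.getVert i ∈ p.support :=
  SimpleGraph.Walk.mem_support_iff_exists_getVert.2 ⟨i, rfl, hi⟩

lemma support_getElem_eq_getVert {u v : α} (p : A.Walk u v) (i : ℕ)
    (h : i < p.support.length) : p.support[i] = p.getVert i := by
  induction p generalizing i with
  | nil =>
    simp only [Walk.support_nil, List.length_singleton] at h
    interval_cases i
    simp [Walk.getVert_zero]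
  | cons ha q ih =>
    rcases i with _ | i
    · simp [Walk.getVert_zero]
    · simp only [Walk.support_cons, List.getElem_cons_succ, Walk.getVert_cons_succ]
      exact ih i (by simpa [Walk.length_support] using h)

lemma cycle_getVert_inj {v : α} {c : A.Walk v v} (hc : c.IsCycle) {i j : ℕ}
    (hi : i < c.length) (hj : j < c.length) (h : c.getVert i = c.getVert j) : i = j := by
  have hlen : c.support.length = c.length + 1 := Walk.length_support c
  have htail : c.support.tail.length = c.length := by simp [hlen]
  have hnd := hc.support_nodup
  -- tail[k-1] = getVert k for 1 ≤ k ≤ length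
  have htl : ∀ (k : ℕ) (hk : k < c.length),
      c.support.tail[k]'(lt_of_lt_of_eq hk htail.symm) = c.getVert (k+1) := by
    intro k hk
    have : c.support.tail[k]'(by omega) = c.support[k+1]'(by omega) := by
      rcases c with _ | _
      · simp at hk
      · simp [Walk.support_cons]
    rw [this, support_getElem_eq_getVert]
  have inj : ∀ k l : ℕ, (hk : k < c.length) → (hl : l < c.length) →
      c.getVert (k+1) = c.getVert (l+1) → k = l := by
    intro k l hk hl he
    have hinj := List.nodup_iff_injective_getElem.1 hnd
    have h2 : (⟨k, by omega⟩ : Fin c.support.tail.length) = ⟨l, by omega⟩ :=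
      hinj (by simpa [htl k hk, htl l hl] using he)
    simpa using h2
  have h0n : c.getVert c.length = c.getVert 0 := by
    rw [Walk.getVert_length, Walk.getVert_zero]
  rcases Nat.eq_zero_or_pos i with rfl | hip
  · rcases Nat.eq_zero_or_pos j with rfl | hjp
    · rfl
    · exfalso
      have : c.getVert ((c.length - 1) + 1) = c.getVert ((j-1)+1) := by
        have h1 : (c.length - 1) + 1 = c.length := by omega
        have h2 : (j - 1) + 1 = j := by omega
        rw [h1, h2, h0n, h]
      have := inj _ _ (by omega) (by omega) this
      omega
  · rcases Nat.eq_zero_or_pos j with rfl | hjp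
    · exfalso
      have : c.getVert ((c.length - 1) + 1) = c.getVert ((i-1)+1) := by
        have h1 : (c.length - 1) + 1 = c.length := by omega
        have h2 : (i - 1) + 1 = i := by omega
        rw [h1, h2, h0n, h]
      have := inj _ _ (by omega) (by omega) this
      omega
    · have : c.getVert ((i-1)+1) = c.getVert ((j-1)+1) := by
        have h1 : (i - 1) + 1 = i := by omega
        have h2 : (j - 1) + 1 = j := by omega
        rw [h1, h2, h]
      have := inj _ _ (by omega) (by omega) this
      omega

lemma edges_getElem_eq {u v : α} (p : A.Walk u v) (k : ℕ) (hk : k < p.length) :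
    p.edges[k]'(by rw [Walk.length_edges]; exact hk) = s(p.getVert k, p.getVert (k+1)) := by
  induction p generalizing k with
  | nil => simp at hk
  | cons ha q ih =>
    rcases k with _ | k
    · simp [Walk.edges_cons, Walk.getVert_zero, Walk.getVert_cons_succ]
    · simp only [Walk.edges_cons, List.getElem_cons_succ, Walk.getVert_cons_succ]
      exact ih k (by simpa [Walk.length_cons] using hk)

lemma mem_edges_iff {u v a b : α} (p : A.Walk u v) :
    s(a, b) ∈ p.edges ↔ ∃ k, s(p.getVert k, p.getVert (k+1)) = s(a, b) ∧ k < p.length := by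
  rw [← Walk.mem_edges_toSubgraph, Subgraph.mem_edgeSet, Walk.toSubgraph_adj_iff]


lemma getVert_mod {x : β} {w : B.Walk x x} {L : ℕ} (hL : w.length = L) (hpos : 0 < L)
    {i : ℕ} (hi : i ≤ L) : w.getVert (i % L) = w.getVert i := by
  rcases eq_or_lt_of_le hi with rfl | hlt
  · rw [Nat.mod_self, Walk.getVert_zero, ← hL, Walk.getVert_length]
  · rw [Nat.mod_eq_of_lt hlt]

lemma adj_cyc {x : β} {w : B.Walk x x} {L : ℕ} (hL : w.length = L) {s : ℕ} (hs : s < L) :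
    B.Adj (w.getVert s) (w.getVert ((s+1) % L)) := by
  rw [getVert_mod hL (by omega) (by omega)]
  exact w.adj_getVert_succ (by omega)

lemma edge_mem_of_index {x : β} {w : B.Walk x x} {L : ℕ} (hL : w.length = L)
    {s : ℕ} (hs : s < L) : s(w.getVert s, w.getVert ((s+1) % L)) ∈ w.edges := by
  rw [getVert_mod hL (by omega) (by omega), ← edges_getElem_eq w s (by omega)]
  exact List.getElem_mem _

/-- In a closed walk with injective `getVert` below `L`, vertex equalities normalize. -/
lemma vert_eq_cases {x : β} {w : B.Walk x x} {L : ℕ} (hL : w.length = L)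
    (hinj : ∀ i j, i < L → j < L → w.getVert i = w.getVert j → i = j)
    {i j : ℕ} (hi : i ≤ L) (hj : j ≤ L) (h : w.getVert i = w.getVert j) :
    i = j ∨ (i = L ∧ j = 0) ∨ (i = 0 ∧ j = L) := by
  have h0 : w.getVert L = w.getVert 0 := by
    rw [Walk.getVert_zero, ← hL, Walk.getVert_length]
  rcases eq_or_lt_of_le hi with rfl | hi'
  · rcases eq_or_lt_of_le hj with rfl | hj'
    · exact Or.inl rfl
    · rcases Nat.eq_zero_or_pos j with rfl | hjp
      · exact Or.inr (Or.inl ⟨rfl, rfl⟩)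
      · exact absurd (hinj 0 j (by omega) hj' (by rw [← h0, h])) (by omega)
  · rcases eq_or_lt_of_le hj with rfl | hj'
    · rcases Nat.eq_zero_or_pos i with rfl | hip
      · exact Or.inr (Or.inr ⟨rfl, rfl⟩)
      · exact absurd (hinj i 0 hi' (by omega) (by rw [h, h0])) (by omega)
    · exact Or.inl (hinj i j hi' hj' h)

lemma edge_consec {x : β} {w : B.Walk x x} {L : ℕ} (hL : w.length = L) (hL2 : 2 ≤ L)
    (hinj : ∀ i j, i < L → j < L → w.getVert i = w.getVert j → i = j)
    {s t : ℕ} (hs : s < L) (ht : t < L)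
    (hmem : s(w.getVert s, w.getVert t) ∈ w.edges) : t = (s+1) % L ∨ s = (t+1) % L := by
  rw [mem_edges_iff] at hmem
  obtain ⟨k, hk, hklt⟩ := hmem
  rw [hL] at hklt
  rw [Sym2.eq_iff] at hk
  rcases hk with ⟨h1, h2⟩ | ⟨h1, h2⟩
  · have hks : k = s := by
      rcases vert_eq_cases hL hinj (by omega) (by omega) h1 with h | ⟨h, h'⟩ | ⟨h, h'⟩ <;> omega
    left
    rcases vert_eq_cases hL hinj (by omega) (by omega) h2 with h | ⟨h, h'⟩ | ⟨h, h'⟩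
    · rw [Nat.mod_eq_of_lt (show s + 1 < L by omega)]; omega
    · rw [show s + 1 = L by omega, Nat.mod_self]; omega
    · omega
  · have hkt : k = t := by
      rcases vert_eq_cases hL hinj (by omega) (by omega) h1 with h | ⟨h, h'⟩ | ⟨h, h'⟩ <;> omega
    right
    rcases vert_eq_cases hL hinj (by omega) (by omega) h2 with h | ⟨h, h'⟩ | ⟨h, h'⟩
    · rw [Nat.mod_eq_of_lt (show t + 1 < L by omega)]; omega
    · rw [show t + 1 = L by omega, Nat.mod_self]; omega
    · omega

/-- Produce a chord of a closed walk from suitable indices. -/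
lemma hasChord_of {v : α} {c : A.Walk v v} {L : ℕ} (hL : c.length = L) (hL2 : 2 ≤ L)
    (hinj : ∀ i j, i < L → j < L → c.getVert i = c.getVert j → i = j)
    {i j : ℕ} (hi : i < L) (hj : j < L) (hadj : A.Adj (c.getVert i) (c.getVert j))
    (hnc1 : j ≠ (i+1) % L) (hnc2 : i ≠ (j+1) % L) : HasChord A c := by
  refine ⟨c.getVert i, c.getVert j, getVert_mem_support c (by omega),
    getVert_mem_support c (by omega), hadj, fun hmem => ?_⟩
  rcases edge_consec hL hL2 hinj hi hj hmem with h | h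
  · exact hnc1 h
  · exact hnc2 h

/-- Extract index form of a chord. -/
lemma chord_indices {x : β} {w : B.Walk x x} {L : ℕ} (hL : w.length = L) (hL2 : 2 ≤ L)
    (hinj : ∀ i j, i < L → j < L → w.getVert i = w.getVert j → i = j)
    (hch : HasChord B w) :
    ∃ s t, s < L ∧ t < L ∧ B.Adj (w.getVert s) (w.getVert t) ∧ s ≠ t ∧
      t ≠ (s+1) % L ∧ s ≠ (t+1) % L := by
  obtain ⟨u, u', hu, hu', hadj, hne⟩ := hch
  rw [Walk.mem_support_iff_exists_getVert] at hu hu'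
  obtain ⟨s0, rfl, hs0⟩ := hu
  obtain ⟨t0, rfl, ht0⟩ := hu'
  rw [hL] at hs0 ht0
  refine ⟨s0 % L, t0 % L, Nat.mod_lt _ (by omega), Nat.mod_lt _ (by omega), ?_, ?_, ?_, ?_⟩
  · rwa [getVert_mod hL (by omega) hs0, getVert_mod hL (by omega) ht0]
  · intro h
    exact hadj.ne (by rw [← getVert_mod hL (by omega) hs0, ← getVert_mod hL (by omega) ht0, h])
  · intro h
    apply hne
    have h1 := edge_mem_of_index hL (L := L) (s := s0 % L) (Nat.mod_lt _ (by omega))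
    rw [getVert_mod hL (by omega) hs0, ← h, getVert_mod hL (by omega) ht0] at h1
    exact h1
  · intro h
    apply hne
    have h1 := edge_mem_of_index hL (L := L) (s := t0 % L) (Nat.mod_lt _ (by omega))
    rw [getVert_mod hL (by omega) ht0, ← h, getVert_mod hL (by omega) hs0] at h1
    exact (Sym2.eq_swap ▸ h1)

lemma walk_of_seq (B : SimpleGraph β) : ∀ (n : ℕ) (b : ℕ → β),
    (∀ k < n, B.Adj (b k) (b (k+1))) →
    ∃ w : B.Walk (b 0) (b n), w.length = n ∧ ∀ i ≤ n, w.getVert i = b i := by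
  intro n
  induction n with
  | zero => exact fun b _ => ⟨Walk.nil, rfl, fun i hi => by
      interval_cases i; simp [Walk.getVert_zero]⟩
  | succ n ih =>
    intro b hadj
    obtain ⟨w', hw'len, hw'gv⟩ := ih (fun k => b (k+1)) (fun k hk => hadj (k+1) (by omega))
    refine ⟨Walk.cons (hadj 0 (by omega)) w', by simp [hw'len], fun i hi => ?_⟩
    rcases i with _ | i
    · simp [Walk.getVert_zero]
    · rw [Walk.getVert_cons_succ]
      exact hw'gv i (by omega)

/-- A closed walk with injective `getVert` is a cycle. -/
lemma isCycle_of_getVert {x : β} (w : B.Walk x x) (L : ℕ) (hL : 3 ≤ L) (hlen : w.length = L)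
    (hinj : ∀ i j, i < L → j < L → w.getVert i = w.getVert j → i = j) : w.IsCycle := by
  have hbe : ∀ {i j : ℕ}, i ≤ L → j ≤ L → w.getVert i = w.getVert j →
      i = j ∨ i = L ∧ j = 0 ∨ i = 0 ∧ j = L := fun hi hj h => vert_eq_cases hlen hinj hi hj h
  refine ⟨⟨⟨?_⟩, ?_⟩, ?_⟩
  · rw [List.nodup_iff_injective_getElem]
    rintro ⟨k, hk⟩ ⟨l, hl⟩ h
    rw [Walk.length_edges, hlen] at hk hl
    simp only at h
    rw [edges_getElem_eq w k (by omega), edges_getElem_eq w l (by omega), Sym2.eq_iff] at h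
    have : k = l := by
      rcases h with ⟨h1, h2⟩ | ⟨h1, h2⟩
      · rcases hbe (i := k) (j := l) (by omega) (by omega) h1 with h | ⟨h, h'⟩ | ⟨h, h'⟩ <;> omega
      · rcases hbe (i := k) (j := l+1) (by omega) (by omega) h1 with h | ⟨h, h'⟩ | ⟨h, h'⟩ <;>
          rcases hbe (i := k+1) (j := l) (by omega) (by omega) h2 with g | ⟨g, g'⟩ | ⟨g, g'⟩ <;>
          omega
    exact Fin.ext this
  · intro h
    have := congrArg Walk.length h
    rw [hlen] at this
    simp at this
    omega
  · have htl : w.support.tail.length = L := by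
      rw [List.length_tail, Walk.length_support, hlen]; omega
    rw [List.nodup_iff_injective_get]
    rintro ⟨k, hk⟩ ⟨l, hl⟩ h
    rw [htl] at hk hl
    have hts : ∀ (m : ℕ) (hm : m < L),
        w.support.tail.get ⟨m, by omega⟩ = w.getVert (m+1) := by
      intro m hm
      rw [List.get_tail _ _ _ (by rw [Walk.length_support, hlen]; omega)]
      show w.support[m+1]'_ = _
      rw [support_getElem_eq_getVert]
    rw [hts k hk, hts l hl] at h
    have : k = l := by
      rcases hbe (i := k+1) (j := l+1) (by omega) (by omega) h with h | ⟨h, h'⟩ | ⟨h, h'⟩ <;> omega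
    exact Fin.ext this

/-- Build a cycle from a cyclic sequence of adjacent, injective vertices. -/
lemma exists_cycle_of_seq (B : SimpleGraph β) (b : ℕ → β) (L : ℕ) (hL : 3 ≤ L)
    (hadj : ∀ k < L, B.Adj (b k) (b (k+1))) (hper : b L = b 0)
    (hinj : ∀ i j, i < L → j < L → b i = b j → i = j) :
    ∃ w : B.Walk (b 0) (b 0), w.IsCycle ∧ w.length = L ∧ ∀ i ≤ L, w.getVert i = b i := by
  obtain ⟨w0, hw0len, hw0gv⟩ := walk_of_seq B L b hadj
  have hlen : (w0.copy rfl hper).length = L := by rw [Walk.length_copy]; exact hw0len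
  have hgv : ∀ i ≤ L, (w0.copy rfl hper).getVert i = b i := by
    intro i hi
    rw [Walk.getVert_copy]
    exact hw0gv i hi
  refine ⟨w0.copy rfl hper, ?_, hlen, hgv⟩
  apply isCycle_of_getVert _ L hL hlen
  intro i j hi hj h
  rw [hgv i (by omega), hgv j (by omega)] at h
  exact hinj i j hi hj h


/-! ### Modular arithmetic helpers -/

lemma mod_succ_eq {n : ℕ} (hn : 1 < n) (x : ℕ) : (x % n + 1) % n = (x + 1) % n := by
  conv_rhs => rw [Nat.add_mod]
  rw [Nat.mod_eq_of_lt hn]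

lemma mod_shift_inj {n i₀ a b : ℕ} (ha : a < n) (hb : b < n)
    (h : (i₀ + a) % n = (i₀ + b) % n) : a = b := by
  have h' : a ≡ b [MOD n] := Nat.ModEq.add_left_cancel' i₀ h
  have h2 : a % n = b % n := h'
  rwa [Nat.mod_eq_of_lt ha, Nat.mod_eq_of_lt hb] at h2

/-- No chord means non-consecutive support vertices are non-adjacent. -/
lemma chord_free {v : α} {c : A.Walk v v} {n : ℕ} (hL : c.length = n) (h2 : 2 ≤ n)
    (hc : c.IsCycle) (hch : ¬HasChord A c) :
    ∀ i j, i < n → j < n → j ≠ (i+1) % n → i ≠ (j+1) % n →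
      ¬A.Adj (c.getVert i) (c.getVert j) := by
  intro i j hi hj h1 h2' hadj
  exact hch (hasChord_of hL h2 (fun i j hi hj h => cycle_getVert_inj hc (hL ▸ hi) (hL ▸ hj) h)
    hi hj hadj h1 h2')

/-! ### The blowup graph -/

/-- The blowup of a graph along a map: same-fiber vertices are adjacent, and
distinct-fiber vertices are adjacent iff their images are. -/
def Blow (K : SimpleGraph β) (f : α → β) : SimpleGraph α where
  Adj p q := p ≠ q ∧ (f p = f q ∨ K.Adj (f p) (f q))
  symm := by
    constructor
    rintro p q ⟨h1, h2 | h2⟩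
    · exact ⟨h1.symm, Or.inl h2.symm⟩
    · exact ⟨h1.symm, Or.inr h2.symm⟩
  loopless := ⟨fun p h => h.1 rfl⟩

lemma blow_chordal (K : SimpleGraph β) (f : α → β) (hK : IsChordal K) :
    IsChordal (Blow K f) := by
  intro v c hc hlen4
  by_contra hch
  set n := c.length with hn
  have hn4 : 4 ≤ n := hlen4
  have hinj : ∀ i j, i < n → j < n → c.getVert i = c.getVert j → i = j :=
    fun i j hi hj h => cycle_getVert_inj hc hi hj h
  have hcf := chord_free (A := Blow K f) hn.symm (by omega) hc hch
  set g : ℕ → α := fun i => c.getVert i with hg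
  -- consecutive vertices have distinct fibers
  have aux : ∀ i j, i < n → j < n → j = (i+1) % n → f (g i) ≠ f (g j) := by
    intro i j hi hj hij hf
    have hji : j ≠ i := by
      intro h
      subst h
      rcases Nat.lt_or_ge (j+1) n with h' | h'
      · rw [Nat.mod_eq_of_lt h'] at hij; omega
      · have : j + 1 = n := by omega
        rw [this, Nat.mod_self] at hij; omega
    set p := (i + (n-1)) % n with hp
    have hpn : p < n := Nat.mod_lt _ (by omega)
    have hpi : (p + 1) % n = i := by
      rw [hp, mod_succ_eq (by omega), show i + (n-1) + 1 = i + n by omega,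
        Nat.add_mod_right, Nat.mod_eq_of_lt hi]
    have hpne : p ≠ i := by
      intro h
      have : (i + (n-1)) % n = (i + 0) % n := by
        rw [Nat.add_zero, Nat.mod_eq_of_lt hi]; exact hp ▸ h
      have := mod_shift_inj (by omega) (by omega) this
      omega
    have hpj : p ≠ j := by
      intro h
      rw [hij, hp] at h
      have : (i + (n-1)) % n = (i + 1) % n := h
      have := mod_shift_inj (by omega) (by omega) this
      omega
    -- adjacency of g p and g i
    have hadjpi : (Blow K f).Adj (g p) (g i) := by
      have := adj_cyc (w := c) hn.symm hpn
      rwa [hpi] at this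
    -- non-consecutiveness of p and j
    have hnc1 : j ≠ (p+1) % n := by rw [hpi]; exact fun h => hji h
    have hnc2 : p ≠ (j+1) % n := by
      intro h
      rw [hij, mod_succ_eq (by omega) (i+1)] at h
      have : (i + (n-1)) % n = (i + 2) % n := hp ▸ h
      have := mod_shift_inj (by omega) (by omega) this
      omega
    have hgpj : g p ≠ g j := fun h => hpj (hinj p j hpn hj h)
    rcases hadjpi.2 with hfe | hKadj
    · exact hcf p j hpn hj hnc1 hnc2 ⟨hgpj, Or.inl (by rw [hfe, hf])⟩
    · exact hcf p j hpn hj hnc1 hnc2 ⟨hgpj, Or.inr (by rwa [hf] at hKadj)⟩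
  -- all fibers are distinct
  have hfib : ∀ i j, i < n → j < n → i ≠ j → f (g i) ≠ f (g j) := by
    intro i j hi hj hne hf
    by_cases h1 : j = (i+1) % n
    · exact aux i j hi hj h1 hf
    by_cases h2 : i = (j+1) % n
    · exact aux j i hj hi h2 hf.symm
    · have hgne : g i ≠ g j := fun h => hne (hinj i j hi hj h)
      exact hcf i j hi hj h1 h2 ⟨hgne, Or.inl hf⟩
  -- project the cycle to K
  set b : ℕ → β := fun k => f (g (k % n)) with hb
  have hbadj : ∀ k < n, K.Adj (b k) (b (k+1)) := by
    intro k hk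
    have hadj := adj_cyc (w := c) hn.symm hk
    have hkk : k % n = k := Nat.mod_eq_of_lt hk
    rcases hadj.2 with hfe | hKadj
    · exact absurd hfe (aux k ((k+1) % n) hk (Nat.mod_lt _ (by omega)) rfl)
    · simpa [hb, hkk] using hKadj
  have hbper : b n = b 0 := by simp [hb]
  have hbinj : ∀ i j, i < n → j < n → b i = b j → i = j := by
    intro i j hi hj h
    by_contra hne
    exact hfib i j hi hj hne (by
      simpa [hb, Nat.mod_eq_of_lt hi, Nat.mod_eq_of_lt hj] using h) 
  obtain ⟨W, hWc, hWlen, hWgv⟩ := exists_cycle_of_seq K b n (by omega) hbadj hbper hbinj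
  have hWinj : ∀ i j, i < n → j < n → W.getVert i = W.getVert j → i = j := by
    intro i j hi hj h
    rw [hWgv i (by omega), hWgv j (by omega)] at h
    exact hbinj i j hi hj h
  obtain ⟨s, t, hs, ht, hadj, hst, hnc1, hnc2⟩ :=
    chord_indices hWlen (by omega) hWinj (hK W hWc (by omega))
  rw [hWgv s (by omega), hWgv t (by omega)] at hadj
  have hgne : g s ≠ g t := fun h => hst (hinj s t hs ht h)
  refine hch (hasChord_of hn.symm (by omega) hinj hs ht
    ⟨hgne, Or.inr ?_⟩ hnc1 hnc2)
  simpa [hb, Nat.mod_eq_of_lt hs, Nat.mod_eq_of_lt ht] using hadj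

/-! ### Collapsing a clique onto its common neighborhood -/

/-- Vertices outside `M` adjacent (in `K`) to every vertex of `M`. -/
def Dset (K : SimpleGraph α) (M : Set α) : Set α := {q | q ∉ M ∧ ∀ x ∈ M, K.Adj x q}

/-- The graph where all vertices of `M` are given the common neighborhood `Dset K M`. -/
def Collapse (K : SimpleGraph α) (M : Set α) : SimpleGraph α where
  Adj p q := p ≠ q ∧ ((p ∈ M ∧ q ∈ M) ∨ (p ∈ M ∧ q ∈ Dset K M) ∨ (q ∈ M ∧ p ∈ Dset K M) ∨
    (p ∉ M ∧ q ∉ M ∧ K.Adj p q))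
  symm := by
    constructor
    rintro p q ⟨h1, h⟩
    refine ⟨h1.symm, ?_⟩
    rcases h with ⟨a, b⟩ | ⟨a, b⟩ | ⟨a, b⟩ | ⟨a, b, hxy⟩
    · exact Or.inl ⟨b, a⟩
    · exact Or.inr (Or.inr (Or.inl ⟨a, b⟩))
    · exact Or.inr (Or.inl ⟨a, b⟩)
    · exact Or.inr (Or.inr (Or.inr ⟨b, a, hxy.symm⟩))
  loopless := ⟨fun p h => h.1 rfl⟩

lemma collapse_adj {K : SimpleGraph α} {M : Set α} {p q : α} :
    (Collapse K M).Adj p q ↔ p ≠ q ∧ ((p ∈ M ∧ q ∈ M) ∨ (p ∈ M ∧ q ∈ Dset K M) ∨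
      (q ∈ M ∧ p ∈ Dset K M) ∨ (p ∉ M ∧ q ∉ M ∧ K.Adj p q)) := Iff.rfl

lemma collapse_le {K : SimpleGraph α} {M : Set α}
    (hM : ∀ x ∈ M, ∀ y ∈ M, x ≠ y → K.Adj x y) : Collapse K M ≤ K := by
  rintro p q ⟨h1, ⟨a, b⟩ | ⟨a, b⟩ | ⟨a, b⟩ | ⟨a, b, hxy⟩⟩
  · exact hM p a q b h1
  · exact b.2 p a
  · exact (b.2 q a).symm
  · exact hxy

lemma collapse_chordal (K : SimpleGraph α) (M : Set α) (hK : IsChordal K) :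
    IsChordal (Collapse K M) := by
  intro v c hc hlen4
  by_contra hch
  set n := c.length with hn
  have hn4 : 4 ≤ n := hlen4
  have hinj : ∀ i j, i < n → j < n → c.getVert i = c.getVert j → i = j :=
    fun i j hi hj h => cycle_getVert_inj hc hi hj h
  have hcf := chord_free (A := Collapse K M) hn.symm (by omega) hc hch
  set g : ℕ → α := fun i => c.getVert i with hg
  have hadjc : ∀ k, k < n → (Collapse K M).Adj (g k) (g ((k+1) % n)) :=
    fun k hk => adj_cyc hn.symm hk
  -- no two distinct positions of the cycle lie in M
  have haux : ∀ i j, i < n → j < n → j = (i+1) % n → g i ∈ M → g j ∈ M → False := by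
    intro i j hi hj hij hgi hgj
    have hji : j ≠ i := by
      intro h
      subst h
      rcases Nat.lt_or_ge (j+1) n with h' | h'
      · rw [Nat.mod_eq_of_lt h'] at hij; omega
      · have hjn : j + 1 = n := by omega
        rw [hjn, Nat.mod_self] at hij; omega
    set p := (i + (n-1)) % n with hp
    have hpn : p < n := Nat.mod_lt _ (by omega)
    have hpi : (p + 1) % n = i := by
      rw [hp, mod_succ_eq (by omega), show i + (n-1) + 1 = i + n by omega,
        Nat.add_mod_right, Nat.mod_eq_of_lt hi]
    have hpne : p ≠ i := by
      intro h
      have h2 : (i + (n-1)) % n = (i + 0) % n := by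
        rw [Nat.add_zero, Nat.mod_eq_of_lt hi]; exact hp ▸ h
      have := mod_shift_inj (by omega) (by omega) h2
      omega
    have hpj : p ≠ j := by
      intro h
      rw [hij, hp] at h
      have := mod_shift_inj (n := n) (i₀ := i) (a := n-1) (b := 1) (by omega) (by omega) h
      omega
    have hadjpi : (Collapse K M).Adj (g p) (g i) := by
      have := hadjc p hpn
      rwa [hpi] at this
    have hnc1 : j ≠ (p+1) % n := by rw [hpi]; exact hji
    have hnc2 : p ≠ (j+1) % n := by
      intro h
      rw [hij, mod_succ_eq (by omega) (i+1)] at h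
      have := mod_shift_inj (n := n) (i₀ := i) (a := n-1) (b := 2) (by omega) (by omega) (hp ▸ h)
      omega
    have hgpj : g p ≠ g j := fun h => hpj (hinj p j hpn hj h)
    by_cases hpM : g p ∈ M
    · exact hcf p j hpn hj hnc1 hnc2 ⟨hgpj, Or.inl ⟨hpM, hgj⟩⟩
    · have hpD : g p ∈ Dset K M := by
        rcases hadjpi.2 with ⟨a, b⟩ | ⟨a, b⟩ | ⟨a, b⟩ | ⟨a, b, hxy⟩
        · exact absurd a hpM
        · exact absurd a hpM
        · exact b
        · exact absurd hgi b
      exact hcf p j hpn hj hnc1 hnc2 ⟨hgpj, Or.inr (Or.inr (Or.inl ⟨hgj, hpD⟩))⟩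
  have hM2 : ∀ i j, i < n → j < n → i ≠ j → g i ∈ M → g j ∈ M → False := by
    intro i j hi hj hij hgi hgj
    by_cases h1 : j = (i+1) % n
    · exact haux i j hi hj h1 hgi hgj
    by_cases h2 : i = (j+1) % n
    · exact haux j i hj hi h2 hgj hgi
    · exact hcf i j hi hj h1 h2 ⟨fun h => hij (hinj i j hi hj h), Or.inl ⟨hgi, hgj⟩⟩
  by_cases hex : ∃ i, i < n ∧ g i ∈ M
  case neg =>
    -- the cycle avoids M entirely: it is a K-cycle
    push_neg at hex
    have hnotM : ∀ i, i < n → g i ∉ M := hex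
    set b : ℕ → α := fun k => g (k % n) with hb
    have hbadj : ∀ k < n, K.Adj (b k) (b (k+1)) := by
      intro k hk
      have hadj := hadjc k hk
      have : K.Adj (g k) (g ((k+1) % n)) := by
        rcases hadj.2 with ⟨a, b'⟩ | ⟨a, b'⟩ | ⟨a, b'⟩ | ⟨a, b', hxy⟩
        · exact absurd a (hnotM k hk)
        · exact absurd a (hnotM k hk)
        · exact absurd a (hnotM _ (Nat.mod_lt _ (by omega)))
        · exact hxy
      simpa [hb, Nat.mod_eq_of_lt hk] using this
    have hbper : b n = b 0 := by simp [hb]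
    have hbinj : ∀ i j, i < n → j < n → b i = b j → i = j := by
      intro i j hi hj h
      exact hinj i j hi hj (by
        simpa [hb, Nat.mod_eq_of_lt hi, Nat.mod_eq_of_lt hj] using h)
    obtain ⟨W, hWc, hWlen, hWgv⟩ := exists_cycle_of_seq K b n (by omega) hbadj hbper hbinj
    have hWinj : ∀ i j, i < n → j < n → W.getVert i = W.getVert j → i = j := by
      intro i j hi hj h
      rw [hWgv i (by omega), hWgv j (by omega)] at h
      exact hbinj i j hi hj h
    obtain ⟨s, t, hs, ht, hadj, hst, hnc1, hnc2⟩ :=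
      chord_indices hWlen (by omega) hWinj (hK W hWc (by omega))
    rw [hWgv s (by omega), hWgv t (by omega)] at hadj
    have hadj' : K.Adj (g s) (g t) := by
      simpa [hb, Nat.mod_eq_of_lt hs, Nat.mod_eq_of_lt ht] using hadj
    exact hcf s t hs ht hnc1 hnc2
      ⟨fun h => hst (hinj s t hs ht h),
        Or.inr (Or.inr (Or.inr ⟨hnotM s hs, hnotM t ht, hadj'⟩))⟩
  case pos =>
    obtain ⟨i₀, hi₀n, hi₀M⟩ := hex
    have huniq : ∀ i, i < n → g i ∈ M → i = i₀ := by
      intro i hi hgM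
      by_contra hne
      exact hM2 i i₀ hi hi₀n hne hgM hi₀M
    set m := n - 2 with hm
    set r : ℕ → α := fun k => g ((i₀ + (k+1)) % n) with hr
    have hrpos : ∀ k : ℕ, (i₀ + (k+1)) % n < n := fun k => Nat.mod_lt _ (by omega)
    have hrM : ∀ k, k ≤ m → r k ∉ M := by
      intro k hk hmem
      have h1 := huniq _ (hrpos k) hmem
      have h2 : (i₀ + (k+1)) % n = (i₀ + 0) % n := by
        simp only [Nat.add_zero, Nat.mod_eq_of_lt hi₀n]; exact h1
      have := mod_shift_inj (by omega) (by omega) h2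
      omega
    have hrinj : ∀ k l, k ≤ m → l ≤ m → r k = r l → k = l := by
      intro k l hk hl h
      have := hinj _ _ (hrpos k) (hrpos l) h
      have := mod_shift_inj (n := n) (i₀ := i₀) (a := k+1) (b := l+1) (by omega) (by omega) this
      omega
    have hsucc : ∀ k : ℕ, ((i₀ + (k+1)) % n + 1) % n = (i₀ + (k+2)) % n := by
      intro k
      rw [mod_succ_eq (by omega), show i₀ + (k+1) + 1 = i₀ + (k+2) by omega]
    have hradj' : ∀ k, k < m → (Collapse K M).Adj (r k) (r (k+1)) := by
      intro k hk
      have := hadjc _ (hrpos k)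
      rw [hsucc k] at this
      exact this
    have hradj : ∀ k, k < m → K.Adj (r k) (r (k+1)) := by
      intro k hk
      rcases (hradj' k hk).2 with ⟨a, b'⟩ | ⟨a, b'⟩ | ⟨a, b'⟩ | ⟨a, b', hxy⟩
      · exact absurd a (hrM k (by omega))
      · exact absurd a (hrM k (by omega))
      · exact absurd a (hrM (k+1) (by omega))
      · exact hxy
    have hrcf : ∀ k l, k ≤ m → l ≤ m → k + 2 ≤ l → ¬K.Adj (r k) (r l) := by
      intro k l hk hl hkl hadj
      have hnc1 : (i₀ + (l+1)) % n ≠ ((i₀ + (k+1)) % n + 1) % n := by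
        rw [hsucc k]
        intro h
        have := mod_shift_inj (n := n) (i₀ := i₀) (a := l+1) (b := k+2) (by omega) (by omega) h
        omega
      have hnc2 : (i₀ + (k+1)) % n ≠ ((i₀ + (l+1)) % n + 1) % n := by
        rw [hsucc l]
        rcases Nat.lt_or_ge (l+2) n with h' | h'
        · intro h
          have := mod_shift_inj (n := n) (i₀ := i₀) (a := k+1) (b := l+2) (by omega) h' h
          omega
        · have hl2 : l + 2 = n := by omega
          rw [show i₀ + (l+2) = i₀ + n by omega, Nat.add_mod_right, Nat.mod_eq_of_lt hi₀n]
          intro h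
          have h2 : (i₀ + (k+1)) % n = (i₀ + 0) % n := by
            simp only [Nat.add_zero, Nat.mod_eq_of_lt hi₀n]; exact h
          have := mod_shift_inj (by omega) (by omega) h2
          omega
      refine hcf _ _ (hrpos k) (hrpos l) hnc1 hnc2
        ⟨fun h => ?_, Or.inr (Or.inr (Or.inr ⟨hrM k hk, hrM l hl, hadj⟩))⟩
      have := hrinj k l hk hl h
      omega
    have hr0D : r 0 ∈ Dset K M := by
      have hadj0 := hadjc i₀ hi₀n
      rcases hadj0.2 with ⟨a, b'⟩ | ⟨a, b'⟩ | ⟨a, b'⟩ | ⟨a, b', hxy⟩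
      · exact absurd b' (hrM 0 (by omega))
      · exact b'
      · exact absurd a (hrM 0 (by omega))
      · exact absurd hi₀M a
    have hrmD : r m ∈ Dset K M := by
      have hadjm := hadjc _ (hrpos m)
      rw [hsucc m, show i₀ + (m+2) = i₀ + n by omega, Nat.add_mod_right,
        Nat.mod_eq_of_lt hi₀n] at hadjm
      rcases hadjm.2 with ⟨a, b'⟩ | ⟨a, b'⟩ | ⟨a, b'⟩ | ⟨a, b', hxy⟩
      · exact absurd a (hrM m (by omega))
      · exact absurd a (hrM m (by omega))
      · exact b'
      · exact absurd hi₀M b'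
    -- density: every vertex of M is K-adjacent to every r t
    have dens : ∀ (d : ℕ) (y : α), y ∈ M → ∀ k l, l - k = d → k ≤ l → l ≤ m →
        K.Adj y (r k) → K.Adj y (r l) → ∀ t, k ≤ t → t ≤ l → K.Adj y (r t) := by
      intro d
      induction d using Nat.strong_induction_on with
      | _ d ih =>
        intro y hy k l hd hkl hlm hak hal t hkt htl
        rcases Nat.lt_or_ge d 2 with hd2 | hd2
        · rcases (show t = k ∨ t = l by omega) with rfl | rfl
          · exact hak
          · exact hal
        set L' := l - k + 2 with hL'
        have hL'4 : 4 ≤ L' := by omega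
        set b : ℕ → α := fun s => if 1 ≤ s ∧ s ≤ L' - 1 then r (k + s - 1) else y with hbd
        have hb0 : b 0 = y := by simp [hbd]
        have hbL : b L' = y := by
          rw [hbd]
          simp only
          rw [if_neg (by omega)]
        have hbmid : ∀ s, 1 ≤ s → s ≤ L' - 1 → b s = r (k + s - 1) := by
          intro s h1 h2
          rw [hbd]
          simp only
          rw [if_pos ⟨h1, h2⟩]
        have hbadj : ∀ s < L', K.Adj (b s) (b (s+1)) := by
          intro s hs
          rcases Nat.eq_zero_or_pos s with rfl | hs1
          · rw [hb0, hbmid 1 (by omega) (by omega), show k + 1 - 1 = k by omega]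
            exact hak
          rcases Nat.lt_or_ge s (L' - 1) with hs2 | hs2
          · rw [hbmid s (by omega) (by omega), hbmid (s+1) (by omega) (by omega),
              show k + (s+1) - 1 = (k + s - 1) + 1 by omega]
            exact hradj _ (by omega)
          · have hsL : s = L' - 1 := by omega
            rw [hsL, hbmid (L'-1) (by omega) (by omega), show L' - 1 + 1 = L' by omega, hbL,
              show k + (L'-1) - 1 = l by omega]
            exact hal.symm
        have hbper : b L' = b 0 := by rw [hb0, hbL]
        have hbinj : ∀ i j, i < L' → j < L' → b i = b j → i = j := by
          intro i j hi hj h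
          rcases Nat.eq_zero_or_pos i with rfl | hi1
          · rcases Nat.eq_zero_or_pos j with rfl | hj1
            · rfl
            · rw [hb0, hbmid j (by omega) (by omega)] at h
              exact absurd (h ▸ hy) (hrM _ (by omega))
          rcases Nat.eq_zero_or_pos j with rfl | hj1
          · rw [hb0, hbmid i (by omega) (by omega)] at h
            exact absurd (h.symm ▸ hy) (hrM _ (by omega))
          · rw [hbmid i (by omega) (by omega), hbmid j (by omega) (by omega)] at h
            have := hrinj _ _ (by omega) (by omega) h
            omega
        obtain ⟨W, hWc, hWlen, hWgv⟩ := exists_cycle_of_seq K b L' (by omega) hbadj hbper hbinj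
        have hWinj : ∀ i j, i < L' → j < L' → W.getVert i = W.getVert j → i = j := by
          intro i j hi hj h
          rw [hWgv i (by omega), hWgv j (by omega)] at h
          exact hbinj i j hi hj h
        obtain ⟨s, t', hs, ht', hadj, hst, hnc1, hnc2⟩ :=
          chord_indices hWlen (by omega) hWinj (hK W hWc (by omega))
        rw [hWgv s (by omega), hWgv t' (by omega)] at hadj
        have hmid : ∃ t₀, k < t₀ ∧ t₀ < l ∧ K.Adj y (r t₀) := by
          rcases Nat.eq_zero_or_pos s with rfl | hs1
          · have ht1 : t' ≠ 1 := by
              intro h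
              exact hnc1 (by rw [h, Nat.mod_eq_of_lt (by omega)])
            have ht2 : t' + 1 ≠ L' := by
              intro h
              exact hnc2 (by rw [h, Nat.mod_self])
            have ht0 : t' ≠ 0 := fun h => hst (by omega)
            rw [hb0, hbmid t' (by omega) (by omega)] at hadj
            exact ⟨k + t' - 1, by omega, by omega, hadj⟩
          rcases Nat.eq_zero_or_pos t' with rfl | ht1
          · have hs1' : s ≠ 1 := by
              intro h
              exact hnc2 (by rw [h, Nat.mod_eq_of_lt (by omega)])
            have hs2 : s + 1 ≠ L' := by
              intro h
              exact hnc1 (by rw [h, Nat.mod_self])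
            rw [hb0, hbmid s (by omega) (by omega)] at hadj
            exact ⟨k + s - 1, by omega, by omega, hadj.symm⟩
          · exfalso
            rw [hbmid s (by omega) (by omega), hbmid t' (by omega) (by omega)] at hadj
            rcases Nat.lt_or_ge s t' with hlt | hge
            · have : t' ≠ s + 1 := by
                intro h
                exact hnc1 (by rw [h, Nat.mod_eq_of_lt (by omega)])
              exact hrcf (k+s-1) (k+t'-1) (by omega) (by omega) (by omega) hadj
            · have hgt : t' < s := by omega
              have : s ≠ t' + 1 := by
                intro h
                exact hnc2 (by rw [h, Nat.mod_eq_of_lt (by omega)])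
              exact hrcf (k+t'-1) (k+s-1) (by omega) (by omega) (by omega) hadj.symm
        obtain ⟨t₀, h1, h2, h3⟩ := hmid
        rcases Nat.le_total t t₀ with hcase | hcase
        · exact ih (t₀ - k) (by omega) y hy k t₀ rfl (by omega) (by omega) hak h3 t hkt hcase
        · exact ih (l - t₀) (by omega) y hy t₀ l rfl (by omega) (by omega) h3 hal t hcase htl
    have hr1D : r 1 ∈ Dset K M :=
      ⟨hrM 1 (by omega), fun y hy => dens m y hy 0 m (by omega) (by omega) le_rfl
        (hr0D.2 y hy) (hrmD.2 y hy) 1 (by omega) (by omega)⟩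
    have hne : g i₀ ≠ r 1 := by
      intro h
      exact hr1D.1 (h ▸ hi₀M)
    have hnc1 : (i₀ + 2) % n ≠ (i₀ + 1) % n := by
      intro h
      have := mod_shift_inj (n := n) (i₀ := i₀) (a := 2) (b := 1) (by omega) (by omega) h
      omega
    have hnc2 : i₀ ≠ ((i₀ + 2) % n + 1) % n := by
      rw [mod_succ_eq (by omega), show i₀ + 2 + 1 = i₀ + 3 by omega]
      intro h
      have h2 : (i₀ + 0) % n = (i₀ + 3) % n := by
        simp only [Nat.add_zero, Nat.mod_eq_of_lt hi₀n]; exact h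
      have := mod_shift_inj (by omega) (by omega) h2
      omega
    have hpos2 : (i₀ + 2) % n < n := Nat.mod_lt _ (by omega)
    exact hcf i₀ ((i₀ + 2) % n) hi₀n hpos2 hnc1 hnc2
      ⟨hne, Or.inr (Or.inl ⟨hi₀M, hr1D⟩)⟩

/-! ### Assembly -/

section Assembly

variable {V C : Type}

lemma forward_dir (G : SimpleGraph V) (col : V → Finset C)
    (H : SimpleGraph V) (hGH : G ≤ H) (hH : IsChordal H)
    (hdisj : ∀ ⦃u v : V⦄, H.Adj u v → Disjoint (col u) (col v)) :
    ∃ H' : SimpleGraph (SplitVert col), SplitGraph G col ≤ H' ∧ IsChordal H' ∧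
      ∀ ⦃p q : SplitVert col⦄, H'.Adj p q → p.1.2 ≠ q.1.2 := by
  refine ⟨Blow H (fun p => p.1.1), ?_, blow_chordal H _ hH, ?_⟩
  · intro p q hpq
    rw [SplitGraph, SimpleGraph.fromRel_adj] at hpq
    obtain ⟨hne, h⟩ := hpq
    refine ⟨hne, ?_⟩
    rcases h with (⟨h1, _⟩ | h2) | (⟨h1, _⟩ | h2)
    · exact Or.inl h1
    · exact Or.inr (hGH h2)
    · exact Or.inl h1.symm
    · exact Or.inr (hGH h2).symm
  · rintro p q ⟨hne, hfe | hadj⟩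
    · intro hc2
      exact hne (Subtype.ext (Prod.ext hfe hc2))
    · intro hc2
      have hd := hdisj hadj
      have h1 : p.1.2 ∈ col p.1.1 := p.2
      have h2 : p.1.2 ∈ col q.1.1 := hc2 ▸ q.2
      exact Finset.disjoint_left.1 hd h1 h2

lemma exists_minimal_chordal {β : Type} [Finite β] (Gl Hu : SimpleGraph β)
    (hle : Gl ≤ Hu) (hch : IsChordal Hu) :
    ∃ K, Gl ≤ K ∧ K ≤ Hu ∧ IsChordal K ∧
      ∀ K', Gl ≤ K' → K' ≤ K → IsChordal K' → K' = K := by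
  have hfin : Finite (SimpleGraph β) :=
    Finite.of_injective (fun K => K.Adj) (fun K1 K2 h => SimpleGraph.ext h)
  set S : Set (SimpleGraph β) := {K | Gl ≤ K ∧ K ≤ Hu ∧ IsChordal K} with hS
  obtain ⟨K, hKS, hmin⟩ := (Finite.to_wellFoundedLT (α := SimpleGraph β)).wf.has_min S
    ⟨Hu, hle, le_refl _, hch⟩
  refine ⟨K, hKS.1, hKS.2.1, hKS.2.2, fun K' h1 h2 h3 => ?_⟩
  by_contra hne
  exact hmin K' ⟨h1, le_trans h2 hKS.2.1, h3⟩ (lt_of_le_of_ne h2 hne)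

lemma backward_dir [Fintype V] [Fintype C] [DecidableEq C]
    (G : SimpleGraph V) (col : V → Finset C)
    (H' : SimpleGraph (SplitVert col)) (hle : SplitGraph G col ≤ H') (hH' : IsChordal H')
    (hcol : ∀ ⦃p q : SplitVert col⦄, H'.Adj p q → p.1.2 ≠ q.1.2) :
    ∃ H : SimpleGraph V, G ≤ H ∧ IsChordal H ∧
      ∀ ⦃u v : V⦄, H.Adj u v → Disjoint (col u) (col v) := by
  classical
  obtain ⟨K, hGK, hKH, hKch, hmin⟩ := exists_minimal_chordal (SplitGraph G col) H' hle hH'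
  -- each clique C_u is a module of K
  have hmod : ∀ (u : V) (p q r : SplitVert col), p.1.1 = u → q.1.1 = u → r.1.1 ≠ u →
      K.Adj p r → K.Adj q r := by
    intro u p q rr hp hq hr hadj
    set M : Set (SplitVert col) := {x | x.1.1 = u} with hM
    have hMcl : ∀ x ∈ M, ∀ y ∈ M, x ≠ y → K.Adj x y := by
      intro x hx y hy hne
      apply hGK
      rw [SplitGraph, SimpleGraph.fromRel_adj]
      have hxy : x.1.1 = y.1.1 := hx.trans hy.symm
      exact ⟨hne, Or.inl (Or.inl ⟨hxy, fun hc => hne (Subtype.ext (Prod.ext hxy hc))⟩)⟩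
    have hKK' : Collapse K M ≤ K := collapse_le hMcl
    have hGK' : SplitGraph G col ≤ Collapse K M := by
      intro x y hxy
      have hxyK : K.Adj x y := hGK hxy
      have hneq : x ≠ y := hxy.ne
      rw [SplitGraph, SimpleGraph.fromRel_adj] at hxy
      obtain ⟨hne, hrel⟩ := hxy
      have hGadj : x.1.1 ≠ y.1.1 → G.Adj x.1.1 y.1.1 := by
        intro hco
        rcases hrel with (⟨h1, _⟩ | h2) | (⟨h1, _⟩ | h2)
        · exact absurd h1 hco
        · exact h2
        · exact absurd h1.symm hco
        · exact h2.symm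
      by_cases hxM : x ∈ M <;> by_cases hyM : y ∈ M
      · exact ⟨hne, Or.inl ⟨hxM, hyM⟩⟩
      · refine ⟨hne, Or.inr (Or.inl ⟨hxM, hyM, fun z hz => ?_⟩)⟩
        apply hGK
        rw [SplitGraph, SimpleGraph.fromRel_adj]
        have hco : x.1.1 ≠ y.1.1 := fun h => hyM (hM ▸ (by
          show y.1.1 = u
          rw [← h]; exact hxM))
        have hG1 : G.Adj z.1.1 y.1.1 := by
          have : z.1.1 = x.1.1 := by rw [hz, ← hxM]
          rw [this]
          exact hGadj hco
        exact ⟨fun h => hG1.ne (congrArg (fun t => t.1.1) h), Or.inl (Or.inr hG1)⟩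
      · refine ⟨hne, Or.inr (Or.inr (Or.inl ⟨hyM, hxM, fun z hz => ?_⟩))⟩
        apply hGK
        rw [SplitGraph, SimpleGraph.fromRel_adj]
        have hco : y.1.1 ≠ x.1.1 := fun h => hxM (hM ▸ (by
          show x.1.1 = u
          rw [← h]; exact hyM))
        have hG1 : G.Adj z.1.1 x.1.1 := by
          have : z.1.1 = y.1.1 := by rw [hz, ← hyM]
          rw [this]
          exact (hGadj hco.symm).symm
        exact ⟨fun h => hG1.ne (congrArg (fun t => t.1.1) h), Or.inl (Or.inr hG1)⟩
      · exact ⟨hne, Or.inr (Or.inr (Or.inr ⟨hxM, hyM, hxyK⟩))⟩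
    have hEq : Collapse K M = K :=
      hmin _ hGK' hKK' (collapse_chordal K M hKch)
    have h1 : (Collapse K M).Adj p rr := by rw [hEq]; exact hadj
    rcases h1.2 with ⟨a, b'⟩ | ⟨a, b'⟩ | ⟨a, b'⟩ | ⟨a, b', hxy⟩
    · exact absurd b' hr
    · exact b'.2 q hq
    · exact absurd a hr
    · exact absurd hp a
  -- define the triangulation of G
  set H : SimpleGraph V :=
    { Adj := fun u v => u ≠ v ∧ (col u = ∅ ∨ col v = ∅ ∨
        ∀ p q : SplitVert col, p.1.1 = u → q.1.1 = v → K.Adj p q)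
      symm := by
        constructor
        rintro u v ⟨hne, h⟩
        refine ⟨hne.symm, ?_⟩
        rcases h with h | h | h
        · exact Or.inr (Or.inl h)
        · exact Or.inl h
        · exact Or.inr (Or.inr fun p q hp hq => (h q p hq hp).symm)
      loopless := ⟨fun u h => h.1 rfl⟩ } with hHdef
  have hHadj : ∀ u v : V, H.Adj u v ↔ (u ≠ v ∧ (col u = ∅ ∨ col v = ∅ ∨
      ∀ p q : SplitVert col, p.1.1 = u → q.1.1 = v → K.Adj p q)) := fun u v => Iff.rfl
  refine ⟨H, ?_, ?_, ?_⟩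
  · -- G ≤ H
    intro u v huv
    rw [hHadj]
    refine ⟨huv.ne, ?_⟩
    by_cases h1 : col u = ∅
    · exact Or.inl h1
    by_cases h2 : col v = ∅
    · exact Or.inr (Or.inl h2)
    · refine Or.inr (Or.inr fun p q hp hq => ?_)
      apply hGK
      rw [SplitGraph, SimpleGraph.fromRel_adj]
      have hG1 : G.Adj p.1.1 q.1.1 := by rw [hp, hq]; exact huv
      exact ⟨fun h => hG1.ne (congrArg (fun t => t.1.1) h), Or.inl (Or.inr hG1)⟩
  · -- chordality of H
    intro w c hc hlen4
    set n := c.length with hn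
    have hn4 : 4 ≤ n := hlen4
    have hinj : ∀ i j, i < n → j < n → c.getVert i = c.getVert j → i = j :=
      fun i j hi hj h => cycle_getVert_inj hc hi hj h
    set g : ℕ → V := fun i => c.getVert i with hg
    have hgadj : ∀ k, k < n → H.Adj (g k) (g ((k+1) % n)) :=
      fun k hk => adj_cyc hn.symm hk
    have hnc_helper : ∀ i, i < n → ((i+2) % n ≠ (i+1) % n ∧ i ≠ ((i+2) % n + 1) % n ∧
        (i+2) % n ≠ i ∧ (i+2) % n < n) := by
      intro i hi
      refine ⟨?_, ?_, ?_, Nat.mod_lt _ (by omega)⟩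
      · intro h
        have := mod_shift_inj (n := n) (i₀ := i) (a := 2) (b := 1) (by omega) (by omega) h
        omega
      · rw [mod_succ_eq (by omega), show i + 2 + 1 = i + 3 by omega]
        intro h
        have h2 : (i + 0) % n = (i + 3) % n := by
          simp only [Nat.add_zero, Nat.mod_eq_of_lt hi]; exact h
        have := mod_shift_inj (by omega) (by omega) h2
        omega
      · intro h
        have h2 : (i + 2) % n = (i + 0) % n := by
          simp only [Nat.add_zero, Nat.mod_eq_of_lt hi]; exact h
        have := mod_shift_inj (by omega) (by omega) h2
        omega
    by_cases hempty : ∃ i, i < n ∧ col (g i) = ∅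
    · obtain ⟨i, hi, h0⟩ := hempty
      obtain ⟨w1, w2, w3, w4⟩ := hnc_helper i hi
      refine hasChord_of hn.symm (by omega) hinj hi w4 ?_ w1 w2
      exact ⟨fun h => w3 ((hinj _ _ hi w4 h).symm), Or.inl h0⟩
    · push_neg at hempty
      have hnon : ∀ k : ℕ, (col (g (k % n))).Nonempty :=
        fun k => hempty _ (Nat.mod_lt _ (by omega))
      let φ : ∀ u : V, (col u).Nonempty → SplitVert col :=
        fun u h => ⟨(u, h.choose), h.choose_spec⟩
      have hφco : ∀ u h, (φ u h).1.1 = u := fun u h => rfl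
      have hφcongr : ∀ u u' h h', u = u' → φ u h = φ u' h' := by
        rintro u u' h h' rfl
        rfl
      set b : ℕ → SplitVert col := fun k => φ (g (k % n)) (hnon k) with hb
      have hbco : ∀ k, (b k).1.1 = g (k % n) := fun k => rfl
      have hbadj : ∀ k < n, K.Adj (b k) (b (k+1)) := by
        intro k hk
        have hH1 := hgadj k hk
        rcases hH1.2 with h | h | h
        · exact absurd h (Finset.nonempty_iff_ne_empty.1 (hempty k hk))
        · exact absurd h (Finset.nonempty_iff_ne_empty.1 (hempty _ (Nat.mod_lt _ (by omega))))
        · exact h (b k) (b (k+1)) (by rw [hbco, Nat.mod_eq_of_lt hk]) (hbco (k+1))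
      have hbper : b n = b 0 := hφcongr _ _ _ _ (by rw [Nat.mod_self, Nat.zero_mod])
      have hbinj : ∀ i j, i < n → j < n → b i = b j → i = j := by
        intro i j hi hj h
        have : g (i % n) = g (j % n) := congrArg (fun t => t.1.1) h
        rw [Nat.mod_eq_of_lt hi, Nat.mod_eq_of_lt hj] at this
        exact hinj i j hi hj this
      obtain ⟨W, hWc, hWlen, hWgv⟩ := exists_cycle_of_seq K b n (by omega) hbadj hbper hbinj
      have hWinj : ∀ i j, i < n → j < n → W.getVert i = W.getVert j → i = j := by
        intro i j hi hj h
        rw [hWgv i (by omega), hWgv j (by omega)] at h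
        exact hbinj i j hi hj h
      obtain ⟨s, t, hs, ht, hadj, hst, hnc1, hnc2⟩ :=
        chord_indices hWlen (by omega) hWinj (hKch W hWc (by omega))
      rw [hWgv s (by omega), hWgv t (by omega)] at hadj
      have hgst : g s ≠ g t := fun h => hst (hinj s t hs ht h)
      refine hasChord_of hn.symm (by omega) hinj hs ht ⟨hgst, ?_⟩ hnc1 hnc2
      by_cases h1 : col (g s) = ∅
      · exact Or.inl h1
      by_cases h2 : col (g t) = ∅
      · exact Or.inr (Or.inl h2)
      refine Or.inr (Or.inr fun p q hp hq => ?_)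
      have hco_s : (b s).1.1 = g s := by rw [hbco, Nat.mod_eq_of_lt hs]
      have hco_t : (b t).1.1 = g t := by rw [hbco, Nat.mod_eq_of_lt ht]
      -- upgrade the single K-edge to all pairs via the module property
      have step1 : K.Adj p (b t) :=
        hmod (g s) (b s) p (b t) hco_s hp (by rw [hco_t]; exact hgst.symm) hadj
      have step2 : K.Adj q p :=
        hmod (g t) (b t) q p hco_t hq (by rw [hp]; exact hgst) step1.symm
      exact step2.symm
  · -- proper multicoloring
    intro u v huv
    rcases huv.2 with h | h | h
    · rw [h]
      exact Finset.disjoint_empty_left _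
    · rw [h]
      exact Finset.disjoint_empty_right _
    · rw [Finset.disjoint_left]
      intro a hau hav
      have hK1 : K.Adj ⟨(u, a), hau⟩ ⟨(v, a), hav⟩ := h _ _ rfl rfl
      exact hcol (hKH hK1) rfl

end Assembly

end CT

/-- a multicolored graph `G` (with color set `C` of size `k`) admits a
properly multicolored triangulation iff the colored graph `G'` (each vertex `v` replaced
by a clique on `v`'s colors, edges of `G` replaced by complete bipartite connections)
admits a properly colored triangulation; moreover `G'` has at most `k·|V(G)|` vertices
and is colored with the same `k` colors. -/
theorem multicolored_iff_colored_triangulation {V C : Type}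
    [Fintype V] [Fintype C] [DecidableEq C]
    (G : SimpleGraph V) (col : V → Finset C) :
    ((∃ H : SimpleGraph V, G ≤ H ∧ IsChordal H ∧
        ∀ ⦃u v : V⦄, H.Adj u v → Disjoint (col u) (col v)) ↔
      (∃ H' : SimpleGraph (SplitVert col), SplitGraph G col ≤ H' ∧ IsChordal H' ∧
        ∀ ⦃p q : SplitVert col⦄, H'.Adj p q → p.1.2 ≠ q.1.2)) ∧
    Fintype.card (SplitVert col) ≤ Fintype.card C * Fintype.card V := by
  constructor
  · constructor
    · rintro ⟨H, h1, h2, h3⟩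
      exact CT.forward_dir G col H h1 h2 h3
    · rintro ⟨H', h1, h2, h3⟩
      exact CT.backward_dir G col H' h1 h2 h3
  · have h1 : Fintype.card (SplitVert col) ≤ Fintype.card (V × C) :=
      Fintype.card_le_of_injective Subtype.val Subtype.val_injective
    simpa [Fintype.card_prod, Nat.mul_comm] using h1
end
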